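/- For every alternating weak k-pebble automaton there exists a nondeterministic weak k-pebble automaton accepting the same data language; hence alternating and nondeterministic weak k-PA recognize the same class of data languages. -/

import Mathlib

/-! Core definitions: weak pebble automata over data words. -/

inductive PAct where
  | stay | right | place | lift
deriving DecidableEq

inductive Tape (Sigma : Type) where
  | leftMarker | rightMarker | letter (σ : Sigma)

/-- The label of position `p` of the padded input `⊲ w ⊳` (positions `1..n` carry
the letters of `w`, position `0` the left-end marker, positions `> n` the right-end marker). -/
def labelAt {Sigma D : Type} (w : List (Sigma × D)) (p : ℕ) : Tape Sigma :=
  if p = 0 then Tape.leftMarker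
  else
    match w[p - 1]? with
    | some x => Tape.letter x.1
    | none => Tape.rightMarker

/-- The data value of position `p` (markers carry no data value). -/
def dataAt {Sigma D : Type} (w : List (Sigma × D)) (p : ℕ) : Option D :=
  if p = 0 then none else (w[p - 1]?).map Prod.snd

/-- A (one-way, alternating) weak `k`-pebble automaton over the alphabet `Sigma`.
Pebbles are numbered from `k` down to `1`; pebble `i` being the head pebble.
A transition `(i, σ, V, q) → (p, act)` is represented by `δ i σ V q p act`. -/
structure WeakPA (Sigma : Type) (k : ℕ) where
  Q : Type
  finQ : Fintype Q
  q0 : Q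
  F : Set Q
  U : Set Q
  δ : ℕ → Tape Sigma → Set ℕ → Q → Q → PAct → Prop

namespace WeakPA

variable {Sigma D : Type} {k : ℕ}

/-- A configuration `(i, q, θ)`: head pebble `i`, current state `q`,
pebble assignment `θ` (meaningful on pebbles `i,…,k`). -/
abbrev Config (A : WeakPA Sigma k) : Type := ℕ × A.Q × (ℕ → ℕ)

/-- The set `V = { l : l > i, l ≤ k, pebble l sees the same data value as pebble i }`. -/
def eqSet (w : List (Sigma × D)) (k i : ℕ) (θ : ℕ → ℕ) : Set ℕ :=
  {l | i < l ∧ l ≤ k ∧ (dataAt w (θ l)).isSome ∧ dataAt w (θ l) = dataAt w (θ i)}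

/-- One step of the weak `k`-PA `A` on the input word `w`. -/
def step (A : WeakPA Sigma k) (w : List (Sigma × D)) :
    A.Config → A.Config → Prop := fun c c' =>
  1 ≤ c.1 ∧ c.1 ≤ k ∧
  (∀ j, j ≠ c.1 → j ≠ c.1 - 1 → c'.2.2 j = c.2.2 j) ∧
  ∃ act : PAct,
    A.δ c.1 (labelAt w (c.2.2 c.1)) (eqSet w k c.1 c.2.2) c.2.1 c'.2.1 act ∧
    match act with
    | PAct.stay =>
        c'.1 = c.1 ∧ c'.2.2 c.1 = c.2.2 c.1 ∧ c'.2.2 (c.1 - 1) = c.2.2 (c.1 - 1)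
    | PAct.right =>
        c'.1 = c.1 ∧ c'.2.2 c.1 = c.2.2 c.1 + 1 ∧ c'.2.2 (c.1 - 1) = c.2.2 (c.1 - 1)
    | PAct.lift =>
        c'.1 = c.1 + 1 ∧ c'.2.2 c.1 = c.2.2 c.1 ∧ c'.2.2 (c.1 - 1) = c.2.2 (c.1 - 1)
    | PAct.place =>
        2 ≤ c.1 ∧ c'.1 = c.1 - 1 ∧ c'.2.2 c.1 = c.2.2 c.1 ∧ c'.2.2 (c.1 - 1) = c.2.2 c.1

/-- The alternating "leads to acceptance" semantics. -/
inductive Leads (A : WeakPA Sigma k) (w : List (Sigma × D)) : A.Config → Prop where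
  | final {c : A.Config} : c.2.1 ∈ A.F → Leads A w c
  | univ {c : A.Config} : c.2.1 ∈ A.U →
      (∀ c', A.step w c c' → Leads A w c') → Leads A w c
  | exist {c c' : A.Config} : c.2.1 ∉ A.F → c.2.1 ∉ A.U →
      A.step w c c' → Leads A w c' → Leads A w c

/-- The initial configuration: pebble `k` on the left-end marker in the initial state. -/
def initConfig (A : WeakPA Sigma k) : A.Config := (k, A.q0, fun _ => 0)

def Accepts (A : WeakPA Sigma k) (w : List (Sigma × D)) : Prop :=
  A.Leads w A.initConfig

/-- The data language of `A` over the data domain `D`. -/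
def Lang (A : WeakPA Sigma k) (D : Type) : Set (List (Sigma × D)) :=
  {w | A.Accepts w}

/-- A weak PA is nondeterministic if it has no universal states. -/
def Nondeterministic (A : WeakPA Sigma k) : Prop := A.U = ∅

/-- A weak PA is deterministic (over data domain `D`) if it is nondeterministic and
exactly one transition applies to each configuration. -/
def Deterministic (A : WeakPA Sigma k) (D : Type) : Prop :=
  A.U = ∅ ∧ ∀ (w : List (Sigma × D)) (c : A.Config),
    1 ≤ c.1 → c.1 ≤ k → ∃! c', A.step w c c'

/-- Top view weak PA: the head pebble `i` may test data equality only with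
pebble `i+1`, i.e. every transition has `V = ∅` or `V = {i+1}`. -/
def TopView (A : WeakPA Sigma k) : Prop :=
  ∀ i t V q q' a, A.δ i t V q q' a → V = ∅ ∨ V = {i + 1}

/-- The states `U` of universal states are required to be disjoint from `F`. -/
def WellFormed (A : WeakPA Sigma k) : Prop := ∀ q ∈ A.U, q ∉ A.F

end WeakPA

/-! ### Auxiliary machinery -/

namespace WeakPA

variable {Sigma D : Type} {k : ℕ}

/-- The successor configuration determined by head `i`, assignment `θ`, new state `q'`
and action `act`. -/
def mkSucc {Q : Type} (i : ℕ) (θ : ℕ → ℕ) (q' : Q) : PAct → ℕ × Q × (ℕ → ℕ)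
  | PAct.stay => (i, q', θ)
  | PAct.right => (i, q', Function.update θ i (θ i + 1))
  | PAct.place => (i - 1, q', Function.update θ (i - 1) (θ i))
  | PAct.lift => (i + 1, q', θ)

theorem step_iff (M : WeakPA Sigma k) (w : List (Sigma × D)) (i : ℕ) (q : M.Q)
    (θ : ℕ → ℕ) (c' : M.Config) :
    M.step w (i, q, θ) c' ↔ 1 ≤ i ∧ i ≤ k ∧ ∃ q' act,
      M.δ i (labelAt w (θ i)) (eqSet w k i θ) q q' act ∧
      (act = PAct.place → 2 ≤ i) ∧ c' = mkSucc i θ q' act := by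
  constructor
  · rintro ⟨h1, h2, hrest, act, hδ, hm⟩
    simp only at h1 h2 hrest hδ hm
    refine ⟨h1, h2, c'.2.1, act, hδ, ?_, ?_⟩
    · rintro rfl; exact hm.1
    · obtain ⟨i', q', θ'⟩ := c'
      simp only at hrest hm ⊢
      cases act with
      | stay =>
        obtain ⟨hi, ha, hb⟩ := hm
        refine Prod.ext hi (Prod.ext rfl ?_)
        funext j
        by_cases hj : j = i
        · subst hj; exact ha
        · by_cases hj' : j = i - 1
          · subst hj'; exact hb
          · exact hrest j hj hj'
      | right =>
        obtain ⟨hi, ha, hb⟩ := hm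
        refine Prod.ext hi (Prod.ext rfl ?_)
        simp only [mkSucc]
        funext j
        by_cases hj : j = i
        · subst hj; simpa using ha
        · rw [Function.update_of_ne hj]
          by_cases hj' : j = i - 1
          · subst hj'; exact hb
          · exact hrest j hj hj'
      | place =>
        obtain ⟨h2i, hi, ha, hb⟩ := hm
        refine Prod.ext hi (Prod.ext rfl ?_)
        simp only [mkSucc]
        funext j
        by_cases hj' : j = i - 1
        · subst hj'; simpa using hb
        · rw [Function.update_of_ne hj']
          by_cases hj : j = i
          · subst hj; exact ha
          · exact hrest j hj hj'
      | lift =>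
        obtain ⟨hi, ha, hb⟩ := hm
        refine Prod.ext hi (Prod.ext rfl ?_)
        funext j
        by_cases hj : j = i
        · subst hj; exact ha
        · by_cases hj' : j = i - 1
          · subst hj'; exact hb
          · exact hrest j hj hj'
  · rintro ⟨h1, h2, q', act, hδ, hpl, rfl⟩
    have hne : (i - 1 : ℕ) ≠ i := by omega
    have hne2 : i ≠ i - 1 := by omega
    cases act with
    | stay =>
      exact ⟨h1, h2, fun j _ _ => rfl, PAct.stay, hδ, rfl, rfl, rfl⟩
    | right =>
      refine ⟨h1, h2, ?_, PAct.right, hδ, ?_⟩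
      · intro j hj _
        simp only [mkSucc]
        exact Function.update_of_ne hj _ _
      · simp [mkSucc, Function.update_apply, hne, hne2]
    | place =>
      refine ⟨h1, h2, ?_, PAct.place, hδ, ?_⟩
      · intro j _ hj'
        simp only [mkSucc]
        exact Function.update_of_ne hj' _ _
      · simp [mkSucc, Function.update_apply, hne, hne2, hpl rfl]
    | lift =>
      exact ⟨h1, h2, fun j _ _ => rfl, PAct.lift, hδ, rfl, rfl, rfl⟩

theorem eqSet_congr (w : List (Sigma × D)) (i : ℕ) {θ θ₂ : ℕ → ℕ}
    (h : ∀ l, i ≤ l → θ₂ l = θ l) : eqSet w k i θ₂ = eqSet w k i θ := by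
  ext l
  simp only [eqSet, Set.mem_setOf_eq]
  constructor
  · rintro ⟨hl, hlk, hs, he⟩
    refine ⟨hl, hlk, ?_, ?_⟩
    · rw [h l hl.le] at hs; exact hs
    · rw [h l hl.le, h i le_rfl] at he; exact he
  · rintro ⟨hl, hlk, hs, he⟩
    refine ⟨hl, hlk, ?_, ?_⟩
    · rw [← h l hl.le] at hs; exact hs
    · rw [← h l hl.le, ← h i le_rfl] at he; exact he

/-- agreement of assignments above the new head, after an action -/
theorem mkSucc_agree {θ θ₂ : ℕ → ℕ} (i : ℕ) (act : PAct)
    (hag : ∀ l, i ≤ l → θ₂ l = θ l) {Q : Type} (q' : Q) :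
    ∀ l, (mkSucc i θ q' act).1 ≤ l →
      (mkSucc i θ₂ q' act).2.2 l = (mkSucc i θ q' act).2.2 l := by
  cases act with
  | stay => exact fun l hl => hag l hl
  | right =>
    intro l hl
    simp only [mkSucc] at hl ⊢
    by_cases hli : l = i
    · subst hli; simp [hag _ le_rfl]
    · rw [Function.update_of_ne hli, Function.update_of_ne hli]; exact hag l hl
  | place =>
    intro l hl
    simp only [mkSucc] at hl ⊢
    by_cases hli : l = i - 1
    · subst hli; simp [hag _ le_rfl]
    · rw [Function.update_of_ne hli, Function.update_of_ne hli]
      exact hag l (by omega)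
  | lift =>
    intro l hl
    simp only [mkSucc] at hl ⊢
    exact hag l (by omega)

theorem mkSucc_head_state {θ θ₂ : ℕ → ℕ} (i : ℕ) (act : PAct) {Q : Type} (q' : Q) :
    (mkSucc i θ₂ q' act).1 = (mkSucc i θ q' act).1 ∧
    (mkSucc i θ₂ q' act).2.1 = (mkSucc i θ q' act).2.1 := by
  cases act <;> exact ⟨rfl, rfl⟩

/-- `Leads` only depends on the pebble assignment at coordinates `≥` the head. -/
theorem leads_agree (M : WeakPA Sigma k) (w : List (Sigma × D)) :
    ∀ c : M.Config, M.Leads w c → ∀ θ₂ : ℕ → ℕ,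
      (∀ x, c.1 ≤ x → θ₂ x = c.2.2 x) → M.Leads w (c.1, c.2.1, θ₂) := by
  intro c hc
  induction hc with
  | @final c h => intro θ₂ _; exact Leads.final h
  | @univ c h _ ih =>
    intro θ₂ hag
    refine Leads.univ h ?_
    intro c₂' hstep
    have hc : c = (c.1, c.2.1, c.2.2) := rfl
    rw [hc, step_iff] at hstep
    obtain ⟨h1, h2, q', act, hδ, hpl, rfl⟩ := hstep
    have hlab : labelAt (D := D) w (θ₂ c.1) = labelAt w (c.2.2 c.1) := by
      rw [hag c.1 le_rfl]
    have heq : eqSet w k c.1 θ₂ = eqSet w k c.1 c.2.2 := eqSet_congr w c.1 hag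
    have hδ' : M.δ c.1 (labelAt w (c.2.2 c.1)) (eqSet w k c.1 c.2.2) c.2.1 q' act := by
      rwa [hlab, heq] at hδ
    have hstep' : M.step w c (mkSucc c.1 c.2.2 q' act) := by
      rw [hc, step_iff]; exact ⟨h1, h2, q', act, hδ', hpl, rfl⟩
    have hkey := ih _ hstep' (mkSucc c.1 θ₂ q' act).2.2
      (by
        intro x hx
        have hh := (mkSucc_head_state (θ := c.2.2) (θ₂ := θ₂) c.1 act q').1
        exact mkSucc_agree c.1 act hag q' x (by rw [← hh] at hx ⊢; exact hx))
    obtain ⟨hh, hs⟩ := mkSucc_head_state (θ := c.2.2) (θ₂ := θ₂) c.1 act q'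
    have : (mkSucc c.1 θ₂ q' act) =
        ((mkSucc c.1 c.2.2 q' act).1, (mkSucc c.1 c.2.2 q' act).2.1,
          (mkSucc c.1 θ₂ q' act).2.2) := by
      refine Prod.ext hh (Prod.ext hs rfl)
    rw [this]
    exact hkey
  | @exist c c' hF hU hstep _ ih =>
    intro θ₂ hag
    have hc : c = (c.1, c.2.1, c.2.2) := rfl
    rw [hc, step_iff] at hstep
    obtain ⟨h1, h2, q', act, hδ, hpl, hc'⟩ := hstep
    have hlab : labelAt (D := D) w (θ₂ c.1) = labelAt w (c.2.2 c.1) := by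
      rw [hag c.1 le_rfl]
    have heq : eqSet w k c.1 θ₂ = eqSet w k c.1 c.2.2 := eqSet_congr w c.1 hag
    have hδ' : M.δ c.1 (labelAt w (θ₂ c.1)) (eqSet w k c.1 θ₂) c.2.1 q' act := by
      rwa [hlab, heq]
    have hstep2 : M.step w (c.1, c.2.1, θ₂) (mkSucc c.1 θ₂ q' act) := by
      rw [step_iff]; exact ⟨h1, h2, q', act, hδ', hpl, rfl⟩
    refine Leads.exist hF hU hstep2 ?_
    subst hc'
    have hkey := ih (mkSucc c.1 θ₂ q' act).2.2
      (by
        intro x hx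
        have hh := (mkSucc_head_state (θ := c.2.2) (θ₂ := θ₂) c.1 act q').1
        exact mkSucc_agree c.1 act hag q' x (by rw [← hh] at hx ⊢; exact hx))
    obtain ⟨hh, hs⟩ := mkSucc_head_state (θ := c.2.2) (θ₂ := θ₂) c.1 act q'
    have : (mkSucc c.1 θ₂ q' act) =
        ((mkSucc c.1 c.2.2 q' act).1, (mkSucc c.1 c.2.2 q' act).2.1,
          (mkSucc c.1 θ₂ q' act).2.2) := by
      refine Prod.ext hh (Prod.ext hs rfl)
    rw [this]
    exact hkey

/-- At a dead head position (outside `[1,k]`) a configuration leads to acceptance iff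
its state is final or universal. -/
theorem leads_dead (M : WeakPA Sigma k) (w : List (Sigma × D)) (i : ℕ) (q : M.Q)
    (θ : ℕ → ℕ) (h : ¬ (1 ≤ i ∧ i ≤ k)) :
    M.Leads w (i, q, θ) ↔ q ∈ M.F ∪ M.U := by
  constructor
  · intro hl
    generalize hc : ((i, q, θ) : M.Config) = c at hl
    induction hl with
    | final hF => subst hc; exact Or.inl hF
    | univ hU _ _ => subst hc; exact Or.inr hU
    | exist _ _ hstep _ _ =>
      subst hc
      rw [step_iff] at hstep
      exact absurd ⟨hstep.1, hstep.2.1⟩ h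
  · rintro (hF | hU)
    · exact Leads.final hF
    · refine Leads.univ hU ?_
      intro c' hstep
      rw [step_iff] at hstep
      exact absurd ⟨hstep.1, hstep.2.1⟩ h

theorem leads_of_step (M : WeakPA Sigma k) (w : List (Sigma × D)) (hU : M.U = ∅)
    {c c' : M.Config} (hstep : M.step w c c') (h : M.Leads w c') : M.Leads w c := by
  by_cases hF : c.2.1 ∈ M.F
  · exact Leads.final hF
  · exact Leads.exist hF (by simp [hU]) hstep h

end WeakPA

instance : Fintype PAct :=
  ⟨{PAct.stay, PAct.right, PAct.place, PAct.lift}, by intro x; cases x <;> simp⟩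

namespace WeakPA

variable {Sigma D : Type} {k : ℕ}

/-- Depth-graded version of `Leads`. -/
def LN (A : WeakPA Sigma k) (w : List (Sigma × D)) : ℕ → A.Config → Prop
  | 0, _ => False
  | n + 1, c =>
      c.2.1 ∈ A.F ∨
      (c.2.1 ∈ A.U ∧ ∀ q' act, 1 ≤ c.1 → c.1 ≤ k →
        A.δ c.1 (labelAt w (c.2.2 c.1)) (eqSet w k c.1 c.2.2) c.2.1 q' act →
        (act = PAct.place → 2 ≤ c.1) → LN A w n (mkSucc c.1 c.2.2 q' act)) ∨
      (c.2.1 ∉ A.F ∧ c.2.1 ∉ A.U ∧ 1 ≤ c.1 ∧ c.1 ≤ k ∧ ∃ q' act,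
        A.δ c.1 (labelAt w (c.2.2 c.1)) (eqSet w k c.1 c.2.2) c.2.1 q' act ∧
        (act = PAct.place → 2 ≤ c.1) ∧ LN A w n (mkSucc c.1 c.2.2 q' act))

theorem LN_succ_of (A : WeakPA Sigma k) (w : List (Sigma × D)) :
    ∀ n c, LN A w n c → LN A w (n + 1) c := by
  intro n
  induction n with
  | zero => exact fun c h => absurd h id
  | succ n ih =>
    intro c h
    rcases h with h | ⟨hU, h⟩ | ⟨hF, hU, h1, h2, q', act, hδ, hpl, h⟩
    · exact Or.inl h
    · exact Or.inr (Or.inl ⟨hU, fun q' act h1 h2 hδ hpl => ih _ (h q' act h1 h2 hδ hpl)⟩)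
    · exact Or.inr (Or.inr ⟨hF, hU, h1, h2, q', act, hδ, hpl, ih _ h⟩)

theorem LN_mono (A : WeakPA Sigma k) (w : List (Sigma × D)) {m n : ℕ} (h : m ≤ n) :
    ∀ c, LN A w m c → LN A w n c := by
  induction h with
  | refl => exact fun c h => h
  | step _ ih => exact fun c hc => LN_succ_of A w _ c (ih c hc)

theorem leads_of_LN (A : WeakPA Sigma k) (w : List (Sigma × D)) :
    ∀ n c, LN A w n c → A.Leads w c := by
  intro n
  induction n with
  | zero => exact fun c h => absurd h id
  | succ n ih =>
    rintro ⟨i, q, θ⟩ h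
    rcases h with h | ⟨hU, h⟩ | ⟨hF, hU, h1, h2, q', act, hδ, hpl, h⟩
    · exact Leads.final h
    · refine Leads.univ hU ?_
      intro c' hstep
      rw [step_iff] at hstep
      obtain ⟨h1, h2, q', act, hδ, hpl, rfl⟩ := hstep
      exact ih _ (h q' act h1 h2 hδ hpl)
    · refine Leads.exist hF hU ?_ (ih _ h)
      rw [step_iff]
      exact ⟨h1, h2, q', act, hδ, hpl, rfl⟩

theorem LN_of_leads (A : WeakPA Sigma k) (w : List (Sigma × D)) :
    ∀ c, A.Leads w c → ∃ n, LN A w n c := by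
  intro c hc
  induction hc with
  | @final c h => exact ⟨1, Or.inl h⟩
  | @univ c hU h ih =>
    classical
    haveI := A.finQ
    -- the set of successors is finite
    have hfin : {c' | A.step w c c'}.Finite := by
      refine Set.Finite.subset
        (Set.finite_range (fun p : A.Q × PAct => mkSucc c.1 c.2.2 p.1 p.2)) ?_
      rintro c' hc'
      have hc'' : A.step w (c.1, c.2.1, c.2.2) c' := hc'
      rw [step_iff] at hc''
      obtain ⟨_, _, q', act, _, _, rfl⟩ := hc''
      exact ⟨(q', act), rfl⟩
    set g : A.Config → ℕ := fun c' =>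
      if hs : A.step w c c' then (ih c' hs).choose else 0 with hg
    obtain ⟨N, hN⟩ : ∃ N, ∀ c', A.step w c c' → LN A w N c' := by
      refine ⟨hfin.toFinset.sup g, ?_⟩
      intro c' hs
      have h1 : LN A w (g c') c' := by
        rw [hg]; simp only [hs, dif_pos]
        exact (ih c' hs).choose_spec
      refine LN_mono A w ?_ _ h1
      exact Finset.le_sup (by rw [Set.Finite.mem_toFinset]; exact hs)
    refine ⟨N + 1, Or.inr (Or.inl ⟨hU, ?_⟩)⟩
    intro q' act h1 h2 hδ hpl
    refine hN _ ?_
    have : A.step w (c.1, c.2.1, c.2.2) (mkSucc c.1 c.2.2 q' act) := by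
      rw [step_iff]; exact ⟨h1, h2, q', act, hδ, hpl, rfl⟩
    exact this
  | @exist c c' hF hU hstep hl ih =>
    obtain ⟨n, hn⟩ := ih
    have hstep' : A.step w (c.1, c.2.1, c.2.2) c' := hstep
    rw [step_iff] at hstep'
    obtain ⟨h1, h2, q', act, hδ, hpl, rfl⟩ := hstep'
    exact ⟨n + 1, Or.inr (Or.inr ⟨hF, hU, h1, h2, q', act, hδ, hpl, hn⟩)⟩

end WeakPA

namespace WeakPA

variable {Sigma D : Type} {k : ℕ}

/-- Relativized depth-graded semantics: lifting above the current head to a state in `R`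
counts as acceptance, and placing a pebble is packaged with a guessed return set. -/
def RN (A : WeakPA Sigma k) (w : List (Sigma × D)) : ℕ → Set A.Q → A.Config → Prop
  | 0, _, _ => False
  | n + 1, R, c =>
      c.2.1 ∈ A.F ∨
      (c.2.1 ∈ A.U ∧ ∀ q' act, 1 ≤ c.1 → c.1 ≤ k →
        A.δ c.1 (labelAt w (c.2.2 c.1)) (eqSet w k c.1 c.2.2) c.2.1 q' act →
        (act = PAct.place → 2 ≤ c.1) →
        (match act with
          | PAct.lift => q' ∈ R
          | PAct.place => ∃ R', RN A w n R' (mkSucc c.1 c.2.2 q' PAct.place) ∧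
              ∀ r ∈ R', RN A w n R (c.1, r, c.2.2)
          | act => RN A w n R (mkSucc c.1 c.2.2 q' act))) ∨
      (c.2.1 ∉ A.F ∧ c.2.1 ∉ A.U ∧ 1 ≤ c.1 ∧ c.1 ≤ k ∧ ∃ q' act,
        A.δ c.1 (labelAt w (c.2.2 c.1)) (eqSet w k c.1 c.2.2) c.2.1 q' act ∧
        (act = PAct.place → 2 ≤ c.1) ∧
        (match act with
          | PAct.lift => q' ∈ R
          | PAct.place => ∃ R', RN A w n R' (mkSucc c.1 c.2.2 q' PAct.place) ∧
              ∀ r ∈ R', RN A w n R (c.1, r, c.2.2)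
          | act => RN A w n R (mkSucc c.1 c.2.2 q' act)))

/-- The successor condition used in `RN`. -/
def RNs (A : WeakPA Sigma k) (w : List (Sigma × D)) (n : ℕ) (R : Set A.Q)
    (c : A.Config) (q' : A.Q) : PAct → Prop
  | PAct.lift => q' ∈ R
  | PAct.place => ∃ R', RN A w n R' (mkSucc c.1 c.2.2 q' PAct.place) ∧
      ∀ r ∈ R', RN A w n R (c.1, r, c.2.2)
  | act => RN A w n R (mkSucc c.1 c.2.2 q' act)

theorem RN_succ_iff (A : WeakPA Sigma k) (w : List (Sigma × D)) (n : ℕ) (R : Set A.Q)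
    (c : A.Config) :
    RN A w (n + 1) R c ↔
      c.2.1 ∈ A.F ∨
      (c.2.1 ∈ A.U ∧ ∀ q' act, 1 ≤ c.1 → c.1 ≤ k →
        A.δ c.1 (labelAt w (c.2.2 c.1)) (eqSet w k c.1 c.2.2) c.2.1 q' act →
        (act = PAct.place → 2 ≤ c.1) → RNs A w n R c q' act) ∨
      (c.2.1 ∉ A.F ∧ c.2.1 ∉ A.U ∧ 1 ≤ c.1 ∧ c.1 ≤ k ∧ ∃ q' act,
        A.δ c.1 (labelAt w (c.2.2 c.1)) (eqSet w k c.1 c.2.2) c.2.1 q' act ∧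
        (act = PAct.place → 2 ≤ c.1) ∧ RNs A w n R c q' act) := by
  constructor
  · rintro (h | ⟨hU, h⟩ | ⟨hF, hU, h1, h2, q', act, hδ, hpl, h⟩)
    · exact Or.inl h
    · refine Or.inr (Or.inl ⟨hU, ?_⟩)
      intro q' act h1 h2 hδ hpl
      have := h q' act h1 h2 hδ hpl
      cases act <;> exact this
    · refine Or.inr (Or.inr ⟨hF, hU, h1, h2, q', act, hδ, hpl, ?_⟩)
      cases act <;> exact h
  · rintro (h | ⟨hU, h⟩ | ⟨hF, hU, h1, h2, q', act, hδ, hpl, h⟩)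
    · exact Or.inl h
    · refine Or.inr (Or.inl ⟨hU, ?_⟩)
      intro q' act h1 h2 hδ hpl
      have := h q' act h1 h2 hδ hpl
      cases act <;> exact this
    · refine Or.inr (Or.inr ⟨hF, hU, h1, h2, q', act, hδ, hpl, ?_⟩)
      cases act <;> exact h

theorem RN_succ_of (A : WeakPA Sigma k) (w : List (Sigma × D)) :
    ∀ n R c, RN A w n R c → RN A w (n + 1) R c := by
  intro n
  induction n with
  | zero => exact fun R c h => absurd h id
  | succ n ih =>
    intro R c h
    rw [RN_succ_iff] at h ⊢
    rcases h with h | ⟨hU, h⟩ | ⟨hF, hU, h1, h2, q', act, hδ, hpl, h⟩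
    · exact Or.inl h
    · refine Or.inr (Or.inl ⟨hU, ?_⟩)
      intro q' act h1 h2 hδ hpl
      have hs := h q' act h1 h2 hδ hpl
      cases act with
      | lift => exact hs
      | place =>
        obtain ⟨R', hc, hr⟩ := hs
        exact ⟨R', ih _ _ hc, fun r hrm => ih _ _ (hr r hrm)⟩
      | stay => exact ih _ _ hs
      | right => exact ih _ _ hs
    · refine Or.inr (Or.inr ⟨hF, hU, h1, h2, q', act, hδ, hpl, ?_⟩)
      cases act with
      | lift => exact h
      | place =>
        obtain ⟨R', hc, hr⟩ := h
        exact ⟨R', ih _ _ hc, fun r hrm => ih _ _ (hr r hrm)⟩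
      | stay => exact ih _ _ h
      | right => exact ih _ _ h

theorem RN_mono (A : WeakPA Sigma k) (w : List (Sigma × D)) {m n : ℕ} (h : m ≤ n) :
    ∀ R c, RN A w m R c → RN A w n R c := by
  induction h with
  | refl => exact fun R c h => h
  | step _ ih => exact fun R c hc => RN_succ_of A w _ R c (ih R c hc)

theorem RN_agree (A : WeakPA Sigma k) (w : List (Sigma × D)) :
    ∀ n R (c : A.Config) (θ₂ : ℕ → ℕ), RN A w n R c →
      (∀ x, c.1 ≤ x → θ₂ x = c.2.2 x) → RN A w n R (c.1, c.2.1, θ₂) := by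
  intro n
  induction n with
  | zero => exact fun R c θ₂ h _ => absurd h id
  | succ n ih =>
    rintro R ⟨i, q, θ⟩ θ₂ h hag
    rw [RN_succ_iff] at h ⊢
    simp only at h hag ⊢
    have hlab : labelAt (D := D) w (θ₂ i) = labelAt w (θ i) := by rw [hag i le_rfl]
    have heq : eqSet w k i θ₂ = eqSet w k i θ := eqSet_congr w i hag
    rcases h with h | ⟨hU, h⟩ | ⟨hF, hU, h1, h2, q', act, hδ, hpl, h⟩
    · exact Or.inl h
    · refine Or.inr (Or.inl ⟨hU, ?_⟩)
      intro q' act h1 h2 hδ hpl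
      rw [hlab, heq] at hδ
      have hs := h q' act h1 h2 hδ hpl
      cases act with
      | lift => exact hs
      | place =>
        obtain ⟨R', hc, hr⟩ := hs
        refine ⟨R', ?_, ?_⟩
        · have := ih R' _ (mkSucc i θ₂ q' PAct.place).2.2 hc
            (mkSucc_agree i PAct.place hag q')
          simpa [mkSucc] using this
        · intro r hrm
          exact ih R (i, r, θ) θ₂ (hr r hrm) hag
      | stay => exact ih R (i, q', θ) θ₂ hs hag
      | right =>
        have := ih R _ (mkSucc i θ₂ q' PAct.right).2.2 hs
          (mkSucc_agree i PAct.right hag q')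
        exact this
    · have hδ₂ : A.δ i (labelAt w (θ₂ i)) (eqSet w k i θ₂) q q' act := by
        rw [hlab, heq]; exact hδ
      refine Or.inr (Or.inr ⟨hF, hU, h1, h2, q', act, hδ₂, hpl, ?_⟩)
      cases act with
      | lift => exact h
      | place =>
        obtain ⟨R', hc, hr⟩ := h
        refine ⟨R', ?_, ?_⟩
        · have := ih R' _ (mkSucc i θ₂ q' PAct.place).2.2 hc
            (mkSucc_agree i PAct.place hag q')
          simpa [mkSucc] using this
        · intro r hrm
          exact ih R (i, r, θ) θ₂ (hr r hrm) hag
      | stay => exact ih R (i, q', θ) θ₂ h hag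
      | right =>
        have := ih R _ (mkSucc i θ₂ q' PAct.right).2.2 h
          (mkSucc_agree i PAct.right hag q')
        exact this

theorem LN_agree (A : WeakPA Sigma k) (w : List (Sigma × D)) :
    ∀ n (c : A.Config) (θ₂ : ℕ → ℕ), LN A w n c →
      (∀ x, c.1 ≤ x → θ₂ x = c.2.2 x) → LN A w n (c.1, c.2.1, θ₂) := by
  intro n
  induction n with
  | zero => exact fun c θ₂ h _ => absurd h id
  | succ n ih =>
    rintro ⟨i, q, θ⟩ θ₂ h hag
    simp only at hag
    have hlab : labelAt (D := D) w (θ₂ i) = labelAt w (θ i) := by rw [hag i le_rfl]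
    have heq : eqSet w k i θ₂ = eqSet w k i θ := eqSet_congr w i hag
    rcases h with h | ⟨hU, h⟩ | ⟨hF, hU, h1, h2, q', act, hδ, hpl, h⟩
    · exact Or.inl h
    · refine Or.inr (Or.inl ⟨hU, ?_⟩)
      intro q' act h1 h2 hδ hpl
      simp only at hδ
      rw [hlab, heq] at hδ
      have hs := h q' act h1 h2 hδ hpl
      have := ih _ (mkSucc i θ₂ q' act).2.2 hs (mkSucc_agree i act hag q')
      obtain ⟨hh, hst⟩ := mkSucc_head_state (θ := θ) (θ₂ := θ₂) i act q'
      have he2 : (mkSucc i θ₂ q' act) = ((mkSucc i θ q' act).1, (mkSucc i θ q' act).2.1,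
          (mkSucc i θ₂ q' act).2.2) := Prod.ext hh (Prod.ext hst rfl)
      rw [he2]
      exact this
    · simp only at hδ
      have hδ₂ : A.δ i (labelAt w (θ₂ i)) (eqSet w k i θ₂) q q' act := by
        rw [hlab, heq]; exact hδ
      refine Or.inr (Or.inr ⟨hF, hU, h1, h2, q', act, hδ₂, hpl, ?_⟩)
      have := ih _ (mkSucc i θ₂ q' act).2.2 h (mkSucc_agree i act hag q')
      obtain ⟨hh, hst⟩ := mkSucc_head_state (θ := θ) (θ₂ := θ₂) i act q'
      have he2 : (mkSucc i θ₂ q' act) = ((mkSucc i θ q' act).1, (mkSucc i θ q' act).2.1,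
          (mkSucc i θ₂ q' act).2.2) := Prod.ext hh (Prod.ext hst rfl)
      rw [he2]
      exact this

end WeakPA

namespace WeakPA

variable {Sigma D : Type} {k : ℕ}

/-- From graded absolute acceptance to graded relative acceptance. -/
theorem RN_of_LN (A : WeakPA Sigma k) (w : List (Sigma × D)) :
    ∀ n (c : A.Config) (R : Set A.Q), LN A w n c →
      (∀ r m, m < n → LN A w m (c.1 + 1, r, c.2.2) → r ∈ R) → RN A w n R c := by
  intro n
  induction n using Nat.strong_induction_on with
  | _ n SI =>
  match n with
  | 0 => exact fun c R h _ => absurd h id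
  | n + 1 =>
    rintro ⟨i, q, θ⟩ R h hR
    simp only at hR
    rw [RN_succ_iff]
    rcases h with h | ⟨hU, h⟩ | ⟨hF, hU, h1, h2, q', act, hδ, hpl, h⟩
    · exact Or.inl h
    · refine Or.inr (Or.inl ⟨hU, ?_⟩)
      intro q' act h1 h2 hδ hpl
      have hs := h q' act h1 h2 hδ hpl
      cases act with
      | stay =>
        exact SI n (Nat.lt_succ_self n) _ R hs
          (fun r m hm hl => hR r m (by omega) hl)
      | right =>
        refine SI n (Nat.lt_succ_self n) _ R hs ?_
        intro r m hm hl
        simp only [mkSucc] at hl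
        refine hR r m (by omega) ?_
        have := LN_agree A w m (i + 1, r, Function.update θ i (θ i + 1)) θ hl ?_
        · exact this
        · intro x hx
          simp only
          rw [Function.update_of_ne (by omega)]
      | lift => exact hR q' n (by omega) hs
      | place =>
        have h2i : 2 ≤ i := hpl rfl
        simp only [mkSucc] at hs ⊢
        set θ' := Function.update θ (i - 1) (θ i) with hθ'
        refine ⟨{r | ∃ m, m < n ∧ LN A w m (i, r, θ')}, ?_, ?_⟩
        · refine SI n (Nat.lt_succ_self n) _ _ hs ?_
          intro r m hm hl
          simp only [mkSucc] at hl
          have hip : i - 1 + 1 = i := by omega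
          rw [hip] at hl
          exact ⟨m, hm, hl⟩
        · rintro r ⟨m, hm, hl⟩
          have hl' : LN A w m (i, r, θ) := by
            have := LN_agree A w m (i, r, θ') θ hl ?_
            · exact this
            · intro x hx
              simp only
              rw [hθ', Function.update_of_ne (by omega)]
          refine RN_mono A w (by omega : m ≤ n) _ _
            (SI m (by omega) (i, r, θ) R hl' ?_)
          intro r' m' hm' hl''
          exact hR r' m' (by omega) hl''
    · refine Or.inr (Or.inr ⟨hF, hU, h1, h2, q', act, hδ, hpl, ?_⟩)
      cases act with
      | stay =>
        exact SI n (Nat.lt_succ_self n) _ R h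
          (fun r m hm hl => hR r m (by omega) hl)
      | right =>
        refine SI n (Nat.lt_succ_self n) _ R h ?_
        intro r m hm hl
        simp only [mkSucc] at hl
        refine hR r m (by omega) ?_
        have := LN_agree A w m (i + 1, r, Function.update θ i (θ i + 1)) θ hl ?_
        · exact this
        · intro x hx
          simp only
          rw [Function.update_of_ne (by omega)]
      | lift => exact hR q' n (by omega) h
      | place =>
        have h2i : 2 ≤ i := hpl rfl
        simp only [mkSucc] at h ⊢
        set θ' := Function.update θ (i - 1) (θ i) with hθ'
        refine ⟨{r | ∃ m, m < n ∧ LN A w m (i, r, θ')}, ?_, ?_⟩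
        · refine SI n (Nat.lt_succ_self n) _ _ h ?_
          intro r m hm hl
          simp only [mkSucc] at hl
          have hip : i - 1 + 1 = i := by omega
          rw [hip] at hl
          exact ⟨m, hm, hl⟩
        · rintro r ⟨m, hm, hl⟩
          have hl' : LN A w m (i, r, θ) := by
            have := LN_agree A w m (i, r, θ') θ hl ?_
            · exact this
            · intro x hx
              simp only
              rw [hθ', Function.update_of_ne (by omega)]
          refine RN_mono A w (by omega : m ≤ n) _ _
            (SI m (by omega) (i, r, θ) R hl' ?_)
          intro r' m' hm' hl''
          exact hR r' m' (by omega) hl''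

/-- From relative acceptance back to absolute acceptance, given that all promised
return states lead to acceptance. -/
theorem leads_of_RN (A : WeakPA Sigma k) (w : List (Sigma × D)) :
    ∀ n R (c : A.Config), RN A w n R c →
      (∀ r, r ∈ R → A.Leads w (c.1 + 1, r, c.2.2)) → A.Leads w c := by
  intro n
  induction n with
  | zero => exact fun R c h _ => absurd h id
  | succ n ih =>
    rintro R ⟨i, q, θ⟩ h hRet
    simp only at hRet
    rw [RN_succ_iff] at h
    rcases h with h | ⟨hU, h⟩ | ⟨hF, hU, h1, h2, q', act, hδ, hpl, h⟩
    · exact Leads.final h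
    · refine Leads.univ hU ?_
      intro c' hstep
      rw [step_iff] at hstep
      obtain ⟨h1, h2, q', act, hδ, hpl, rfl⟩ := hstep
      have hs := h q' act h1 h2 hδ hpl
      cases act with
      | stay => exact ih R _ hs hRet
      | right =>
        refine ih R _ hs ?_
        intro r hr
        simp only [mkSucc]
        have := leads_agree A w _ (hRet r hr) (Function.update θ i (θ i + 1))
          (by
            intro x hx
            simp only
            rw [Function.update_of_ne (by omega)])
        exact this
      | lift => exact hRet q' hs
      | place =>
        have h2i : 2 ≤ i := hpl rfl
        obtain ⟨R', hchild, hconts⟩ := hs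
        refine ih R' _ hchild ?_
        intro r hr
        simp only [mkSucc]
        have hip : i - 1 + 1 = i := by omega
        rw [hip]
        have hlr : A.Leads w (i, r, θ) := ih R _ (hconts r hr) hRet
        have := leads_agree A w (i, r, θ) hlr (Function.update θ (i - 1) (θ i))
          (by
            intro x hx
            simp only
            rw [Function.update_of_ne (by omega)])
        exact this
    · have hstep : A.step w (i, q, θ) (mkSucc i θ q' act) := by
        rw [step_iff]; exact ⟨h1, h2, q', act, hδ, hpl, rfl⟩
      refine Leads.exist hF hU hstep ?_
      cases act with
      | stay => exact ih R _ h hRet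
      | right =>
        refine ih R _ h ?_
        intro r hr
        simp only [mkSucc]
        have := leads_agree A w _ (hRet r hr) (Function.update θ i (θ i + 1))
          (by
            intro x hx
            simp only
            rw [Function.update_of_ne (by omega)])
        exact this
      | lift => exact hRet q' h
      | place =>
        have h2i : 2 ≤ i := hpl rfl
        obtain ⟨R', hchild, hconts⟩ := h
        refine ih R' _ hchild ?_
        intro r hr
        simp only [mkSucc]
        have hip : i - 1 + 1 = i := by omega
        rw [hip]
        have hlr : A.Leads w (i, r, θ) := ih R _ (hconts r hr) hRet
        have := leads_agree A w (i, r, θ) hlr (Function.update θ (i - 1) (θ i))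
          (by
            intro x hx
            simp only
            rw [Function.update_of_ne (by omega)])
        exact this

end WeakPA

namespace WeakPA

variable {Sigma D : Type} {k : ℕ}

/-- States of the simulating nondeterministic automaton: for every level `j ∈ [1,k]`
a set `S j` of current obligations, a set `N j` of obligations at the next position,
a set `P j` of pending child launches, and the promised return set `Rt j`. -/
structure BSt (Q : Type) (k : ℕ) where
  S : ℕ → Set Q
  N : ℕ → Set Q
  P : ℕ → Set Q
  Rt : ℕ → Set Q
  hS : ∀ j, k < j → S j = ∅
  hN : ∀ j, k < j → N j = ∅
  hP : ∀ j, k < j → P j = ∅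
  hRt : ∀ j, k < j → Rt j = ∅

namespace BSt

theorem ext' {Q : Type} {K K' : BSt Q k} (h1 : K.S = K'.S) (h2 : K.N = K'.N)
    (h3 : K.P = K'.P) (h4 : K.Rt = K'.Rt) : K = K' := by
  cases K; cases K'; simp_all

instance finite {Q : Type} [Finite Q] : Finite (BSt Q k) := by
  have hf : Function.Injective
      (fun K : BSt Q k => ((fun j : Fin (k + 1) => K.S j, fun j : Fin (k + 1) => K.N j),
        (fun j : Fin (k + 1) => K.P j, fun j : Fin (k + 1) => K.Rt j))) := by
    intro K1 K2 h
    simp only [Prod.mk.injEq] at h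
    obtain ⟨⟨hS, hN⟩, hP, hRt⟩ := h
    have key : ∀ (f g : ℕ → Set Q), (∀ j, k < j → f j = ∅) → (∀ j, k < j → g j = ∅) →
        ((fun j : Fin (k + 1) => f j) = fun j : Fin (k + 1) => g j) → f = g := by
      intro f g hf hg hfg
      funext j
      rcases le_or_gt j k with hj | hj
      · have := congrFun hfg ⟨j, by omega⟩
        exact this
      · rw [hf j hj, hg j hj]
    exact ext' (key _ _ K1.hS K2.hS hS) (key _ _ K1.hN K2.hN hN)
      (key _ _ K1.hP K2.hP hP) (key _ _ K1.hRt K2.hRt hRt)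
  exact Finite.of_injective _ hf

variable {Q : Type}

/-- Replace the `S`, `N`, `P` components at level `i`. -/
def proc (K : BSt Q k) (i : ℕ) (Sn Nn Pn : Set Q) : BSt Q k where
  S := fun j => if j = i ∧ i ≤ k then Sn else K.S j
  N := fun j => if j = i ∧ i ≤ k then Nn else K.N j
  P := fun j => if j = i ∧ i ≤ k then Pn else K.P j
  Rt := K.Rt
  hS := fun j hj => by
    rw [if_neg (by rintro ⟨rfl, h⟩; omega)]; exact K.hS j hj
  hN := fun j hj => by
    rw [if_neg (by rintro ⟨rfl, h⟩; omega)]; exact K.hN j hj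
  hP := fun j hj => by
    rw [if_neg (by rintro ⟨rfl, h⟩; omega)]; exact K.hP j hj
  hRt := K.hRt

/-- Launch a child at level `i - 1` with obligation `qc` and promised return set `R`,
adding the continuations `R` to the obligations at level `i`. -/
def launch (K : BSt Q k) (i : ℕ) (qc : Q) (R : Set Q) : BSt Q k where
  S := fun j => if j = i ∧ i ≤ k then K.S i ∪ R
    else if j = i - 1 ∧ i - 1 ≤ k then {qc} else K.S j
  N := fun j => if j = i - 1 ∧ i - 1 ≤ k then ∅ else K.N j
  P := fun j => if j = i ∧ i ≤ k then K.P i \ {qc}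
    else if j = i - 1 ∧ i - 1 ≤ k then ∅ else K.P j
  Rt := fun j => if j = i - 1 ∧ i - 1 ≤ k then R else K.Rt j
  hS := fun j hj => by
    rw [if_neg (by rintro ⟨rfl, h⟩; omega), if_neg (by rintro ⟨rfl, h⟩; omega)]
    exact K.hS j hj
  hN := fun j hj => by
    rw [if_neg (by rintro ⟨rfl, h⟩; omega)]; exact K.hN j hj
  hP := fun j hj => by
    rw [if_neg (by rintro ⟨rfl, h⟩; omega), if_neg (by rintro ⟨rfl, h⟩; omega)]
    exact K.hP j hj
  hRt := fun j hj => by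
    rw [if_neg (by rintro ⟨rfl, h⟩; omega)]; exact K.hRt j hj

section procLemmas

variable (K : BSt Q k) (i : ℕ) (Sn Nn Pn : Set Q)

theorem proc_S_self (h : i ≤ k) : (K.proc i Sn Nn Pn).S i = Sn := if_pos ⟨rfl, h⟩
theorem proc_N_self (h : i ≤ k) : (K.proc i Sn Nn Pn).N i = Nn := if_pos ⟨rfl, h⟩
theorem proc_P_self (h : i ≤ k) : (K.proc i Sn Nn Pn).P i = Pn := if_pos ⟨rfl, h⟩
theorem proc_S_ne {j : ℕ} (h : j ≠ i) : (K.proc i Sn Nn Pn).S j = K.S j :=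
  if_neg (by rintro ⟨rfl, _⟩; exact h rfl)
theorem proc_N_ne {j : ℕ} (h : j ≠ i) : (K.proc i Sn Nn Pn).N j = K.N j :=
  if_neg (by rintro ⟨rfl, _⟩; exact h rfl)
theorem proc_P_ne {j : ℕ} (h : j ≠ i) : (K.proc i Sn Nn Pn).P j = K.P j :=
  if_neg (by rintro ⟨rfl, _⟩; exact h rfl)
@[simp] theorem proc_Rt : (K.proc i Sn Nn Pn).Rt = K.Rt := rfl

end procLemmas

section launchLemmas

variable (K : BSt Q k) (i : ℕ) (qc : Q) (R : Set Q)

theorem launch_S_self (h : i ≤ k) : (K.launch i qc R).S i = K.S i ∪ R := if_pos ⟨rfl, h⟩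
theorem launch_P_self (h : i ≤ k) : (K.launch i qc R).P i = K.P i \ {qc} := if_pos ⟨rfl, h⟩
theorem launch_N_self (h2 : 2 ≤ i) : (K.launch i qc R).N i = K.N i :=
  if_neg (by rintro ⟨h, _⟩; omega)
theorem launch_S_child (h2 : 2 ≤ i) (h : i ≤ k) : (K.launch i qc R).S (i - 1) = {qc} := by
  unfold launch
  simp only
  rw [if_neg (by rintro ⟨h', _⟩; omega), if_pos (show True ∧ i - 1 ≤ k from ⟨trivial, by omega⟩)]
theorem launch_N_child (h : i ≤ k) : (K.launch i qc R).N (i - 1) = ∅ := by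
  unfold launch
  simp only
  rw [if_pos (show True ∧ i - 1 ≤ k from ⟨trivial, by omega⟩)]
theorem launch_P_child (h2 : 2 ≤ i) (h : i ≤ k) : (K.launch i qc R).P (i - 1) = ∅ := by
  unfold launch
  simp only
  rw [if_neg (by rintro ⟨h', _⟩; omega), if_pos (show True ∧ i - 1 ≤ k from ⟨trivial, by omega⟩)]
theorem launch_Rt_child (h : i ≤ k) : (K.launch i qc R).Rt (i - 1) = R := by
  unfold launch
  simp only
  rw [if_pos (show True ∧ i - 1 ≤ k from ⟨trivial, by omega⟩)]
theorem launch_S_ne {j : ℕ} (h : j ≠ i) (h' : j ≠ i - 1) : (K.launch i qc R).S j = K.S j := by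
  unfold launch
  simp only
  rw [if_neg (by rintro ⟨rfl, _⟩; exact h rfl), if_neg (by rintro ⟨rfl, _⟩; exact h' rfl)]
theorem launch_N_ne {j : ℕ} (h' : j ≠ i - 1) : (K.launch i qc R).N j = K.N j :=
  if_neg (by rintro ⟨rfl, _⟩; exact h' rfl)
theorem launch_P_ne {j : ℕ} (h : j ≠ i) (h' : j ≠ i - 1) : (K.launch i qc R).P j = K.P j := by
  unfold launch
  simp only
  rw [if_neg (by rintro ⟨rfl, _⟩; exact h rfl), if_neg (by rintro ⟨rfl, _⟩; exact h' rfl)]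
theorem launch_Rt_ne {j : ℕ} (h' : j ≠ i - 1) : (K.launch i qc R).Rt j = K.Rt j :=
  if_neg (by rintro ⟨rfl, _⟩; exact h' rfl)

end launchLemmas

/-- The all-empty state. -/
def empty (Q : Type) (k : ℕ) : BSt Q k :=
  ⟨fun _ => ∅, fun _ => ∅, fun _ => ∅, fun _ => ∅,
    fun _ _ => rfl, fun _ _ => rfl, fun _ _ => rfl, fun _ _ => rfl⟩

end BSt

variable (A : WeakPA Sigma k)

/-- The effective return-promise of level `j`. -/
def RetK (K : BSt A.Q k) (j : ℕ) : Set A.Q := if j = k then A.F ∪ A.U else K.Rt j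

theorem RetK_proc (K : BSt A.Q k) (i j : ℕ) (Sn Nn Pn : Set A.Q) :
    A.RetK (K.proc i Sn Nn Pn) j = A.RetK K j := by
  unfold RetK; rw [BSt.proc_Rt]

theorem RetK_launch (K : BSt A.Q k) (i j : ℕ) (qc : A.Q) (R : Set A.Q) (h : j ≠ i - 1) :
    A.RetK (K.launch i qc R) j = A.RetK K j := by
  unfold RetK
  rw [BSt.launch_Rt_ne _ _ _ _ h]

/-- The transition relation of the simulating automaton. -/
def Bdelta : ℕ → Tape Sigma → Set ℕ → BSt A.Q k → BSt A.Q k → PAct → Prop :=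
  fun i σ V K K' actB =>
    (actB = PAct.stay ∧ ∃ q ∈ K.S i,
      ((q ∈ A.F ∧ K' = K.proc i (K.S i \ {q}) (K.N i) (K.P i)) ∨
       (q ∈ A.U ∧ (∀ q', A.δ i σ V q q' PAct.lift → q' ∈ A.RetK K i) ∧
         K' = K.proc i ((K.S i \ {q}) ∪ {q' | A.δ i σ V q q' PAct.stay})
            (K.N i ∪ {q' | A.δ i σ V q q' PAct.right})
            (K.P i ∪ {q' | A.δ i σ V q q' PAct.place ∧ 2 ≤ i})) ∨
       (q ∉ A.F ∧ q ∉ A.U ∧ ∃ q' act, A.δ i σ V q q' act ∧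
         ((act = PAct.stay ∧ K' = K.proc i ((K.S i \ {q}) ∪ {q'}) (K.N i) (K.P i)) ∨
          (act = PAct.right ∧ K' = K.proc i (K.S i \ {q}) (K.N i ∪ {q'}) (K.P i)) ∨
          (act = PAct.lift ∧ q' ∈ A.RetK K i ∧
            K' = K.proc i (K.S i \ {q}) (K.N i) (K.P i)) ∨
          (act = PAct.place ∧ 2 ≤ i ∧
            K' = K.proc i (K.S i \ {q}) (K.N i) (K.P i ∪ {q'})))))) ∨
    (actB = PAct.right ∧ K.S i = ∅ ∧ K.P i = ∅ ∧ K' = K.proc i (K.N i) ∅ (K.P i)) ∨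
    (actB = PAct.place ∧ ∃ qc ∈ K.P i, ∃ R : Set A.Q, K' = K.launch i qc R) ∨
    (actB = PAct.lift ∧ K.S i = ∅ ∧ K.N i = ∅ ∧ K.P i = ∅ ∧ K' = K)

/-- The simulating nondeterministic automaton. -/
noncomputable def Bauto : WeakPA Sigma k where
  Q := BSt A.Q k
  finQ := by
    haveI := A.finQ
    exact Fintype.ofFinite _
  q0 := (BSt.empty A.Q k).proc k {A.q0} ∅ ∅
  F := {K | ∀ j, K.S j = ∅ ∧ K.N j = ∅ ∧ K.P j = ∅}
  U := ∅
  δ := A.Bdelta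

attribute [reducible] Bauto

@[simp] theorem Bauto_U : (A.Bauto : WeakPA Sigma k).U = ∅ := rfl

theorem Bauto_F_iff (K : BSt A.Q k) :
    K ∈ (A.Bauto : WeakPA Sigma k).F ↔ ∀ j, K.S j = ∅ ∧ K.N j = ∅ ∧ K.P j = ∅ :=
  Iff.rfl

/-- All levels below `i` are inactive. -/
def lowE (i : ℕ) (K : BSt A.Q k) : Prop :=
  ∀ j, j < i → K.S j = ∅ ∧ K.N j = ∅ ∧ K.P j = ∅

end WeakPA

namespace WeakPA

variable {Sigma D : Type} {k : ℕ} (A : WeakPA Sigma k) (w : List (Sigma × D))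

/-- Ungraded relative acceptance. -/
def Rel (R : Set A.Q) (c : A.Config) : Prop := ∃ n, RN A w n R c

/-- Ungraded successor condition. -/
def RelS (R : Set A.Q) (c : A.Config) (q' : A.Q) : PAct → Prop
  | PAct.lift => q' ∈ R
  | PAct.place => ∃ R', Rel A w R' (mkSucc c.1 c.2.2 q' PAct.place) ∧
      ∀ r ∈ R', Rel A w R (c.1, r, c.2.2)
  | act => Rel A w R (mkSucc c.1 c.2.2 q' act)

theorem RNs_mono {m n : ℕ} (h : m ≤ n) (R : Set A.Q) (c : A.Config) (q' : A.Q)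
    (act : PAct) : RNs A w m R c q' act → RNs A w n R c q' act := by
  cases act with
  | lift => exact id
  | place =>
    rintro ⟨R', hc, hr⟩
    exact ⟨R', RN_mono A w h _ _ hc, fun r hrm => RN_mono A w h _ _ (hr r hrm)⟩
  | stay => exact RN_mono A w h _ _
  | right => exact RN_mono A w h _ _

theorem RelS_graded (R : Set A.Q) (c : A.Config) (q' : A.Q) (act : PAct)
    (h : RelS A w R c q' act) : ∃ n, RNs A w n R c q' act := by
  classical
  haveI := A.finQ
  cases act with
  | lift => exact ⟨0, h⟩
  | stay => exact h
  | right => exact h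
  | place =>
    obtain ⟨R', ⟨n₀, hc⟩, hr⟩ := h
    set g : A.Q → ℕ := fun r => if hm : r ∈ R' then (hr r hm).choose else 0 with hg
    refine ⟨n₀ ⊔ Finset.univ.sup g, R', RN_mono A w le_sup_left _ _ hc, ?_⟩
    intro r hrm
    have h1 : RN A w (g r) R (c.1, r, c.2.2) := by
      rw [hg]; simp only [hrm, dif_pos]
      exact (hr r hrm).choose_spec
    exact RN_mono A w (le_trans (Finset.le_sup (Finset.mem_univ r)) le_sup_right) _ _ h1

theorem rel_final {R : Set A.Q} {c : A.Config} (hF : c.2.1 ∈ A.F) : Rel A w R c :=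
  ⟨1, Or.inl hF⟩

theorem rel_exist {R : Set A.Q} {c : A.Config} (hF : c.2.1 ∉ A.F) (hU : c.2.1 ∉ A.U)
    (h1 : 1 ≤ c.1) (h2 : c.1 ≤ k) (q' : A.Q) (act : PAct)
    (hδ : A.δ c.1 (labelAt w (c.2.2 c.1)) (eqSet w k c.1 c.2.2) c.2.1 q' act)
    (hpl : act = PAct.place → 2 ≤ c.1) (hs : RelS A w R c q' act) : Rel A w R c := by
  obtain ⟨n, hn⟩ := RelS_graded A w R c q' act hs
  exact ⟨n + 1, (RN_succ_iff A w n R c).2 (Or.inr (Or.inr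
    ⟨hF, hU, h1, h2, q', act, hδ, hpl, hn⟩))⟩

theorem rel_univ {R : Set A.Q} {c : A.Config} (hU : c.2.1 ∈ A.U)
    (h : ∀ q' act, 1 ≤ c.1 → c.1 ≤ k →
      A.δ c.1 (labelAt w (c.2.2 c.1)) (eqSet w k c.1 c.2.2) c.2.1 q' act →
      (act = PAct.place → 2 ≤ c.1) → RelS A w R c q' act) : Rel A w R c := by
  classical
  haveI := A.finQ
  set cond : A.Q × PAct → Prop := fun p => 1 ≤ c.1 ∧ c.1 ≤ k ∧
    A.δ c.1 (labelAt w (c.2.2 c.1)) (eqSet w k c.1 c.2.2) c.2.1 p.1 p.2 ∧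
    (p.2 = PAct.place → 2 ≤ c.1) with hcond
  set g : A.Q × PAct → ℕ := fun p =>
    if hc : cond p then
      (RelS_graded A w R c p.1 p.2 (h p.1 p.2 hc.1 hc.2.1 hc.2.2.1 hc.2.2.2)).choose
    else 0 with hg
  refine ⟨Finset.univ.sup g + 1, (RN_succ_iff A w _ R c).2 (Or.inr (Or.inl ⟨hU, ?_⟩))⟩
  intro q' act h1 h2 hδ hpl
  have hcp : cond (q', act) := ⟨h1, h2, hδ, hpl⟩
  have h3 : RNs A w (g (q', act)) R c q' act := by
    rw [hg]
    dsimp only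
    rw [dif_pos hcp]
    exact (RelS_graded A w R c q' act
      (h q' act hcp.1 hcp.2.1 hcp.2.2.1 hcp.2.2.2)).choose_spec
  exact RNs_mono A w (Finset.le_sup (Finset.mem_univ (q', act))) R c q' act h3

theorem Rel_agree {R : Set A.Q} {c : A.Config} {θ₂ : ℕ → ℕ} (h : Rel A w R c)
    (hag : ∀ x, c.1 ≤ x → θ₂ x = c.2.2 x) : Rel A w R (c.1, c.2.1, θ₂) := by
  obtain ⟨n, hn⟩ := h
  exact ⟨n, RN_agree A w n R c θ₂ hn hag⟩

end WeakPA

namespace WeakPA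

namespace BSt

variable {k : ℕ} {Q : Type}

/-- Replace the `Rt` component wholesale. -/
def withRt (K : BSt Q k) (Rt₂ : ℕ → Set Q) (h : ∀ j, k < j → Rt₂ j = ∅) : BSt Q k :=
  ⟨K.S, K.N, K.P, Rt₂, K.hS, K.hN, K.hP, h⟩

@[simp] theorem withRt_S (K : BSt Q k) (Rt₂ : ℕ → Set Q) (h) :
    (K.withRt Rt₂ h).S = K.S := rfl
@[simp] theorem withRt_N (K : BSt Q k) (Rt₂ : ℕ → Set Q) (h) :
    (K.withRt Rt₂ h).N = K.N := rfl
@[simp] theorem withRt_P (K : BSt Q k) (Rt₂ : ℕ → Set Q) (h) :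
    (K.withRt Rt₂ h).P = K.P := rfl
@[simp] theorem withRt_Rt (K : BSt Q k) (Rt₂ : ℕ → Set Q) (h) :
    (K.withRt Rt₂ h).Rt = Rt₂ := rfl

theorem withRt_proc (K : BSt Q k) (Rt₂ : ℕ → Set Q) (h h') (i : ℕ) (Sn Nn Pn : Set Q) :
    (K.proc i Sn Nn Pn).withRt Rt₂ h = (K.withRt Rt₂ h').proc i Sn Nn Pn :=
  ext' rfl rfl rfl rfl

end BSt

variable {Sigma D : Type} {k : ℕ} (A : WeakPA Sigma k) (w : List (Sigma × D))

theorem RetK_withRt (K : BSt A.Q k) (Rt₂ : ℕ → Set A.Q) (h) (i : ℕ)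
    (hag : Rt₂ i = K.Rt i) : A.RetK (K.withRt Rt₂ h) i = A.RetK K i := by
  unfold RetK
  split_ifs with hik
  · rfl
  · simpa using hag

/-- Acceptance of the simulator does not depend on the `Rt` components below the head. -/
theorem BLeads_Rt_agree :
    ∀ c : (A.Bauto : WeakPA Sigma k).Config, (A.Bauto : WeakPA Sigma k).Leads w c →
      ∀ (Rt₂ : ℕ → Set A.Q) (hsupp : ∀ j, k < j → Rt₂ j = ∅),
        (∀ j, c.1 ≤ j → Rt₂ j = (c.2.1).Rt j) →
        (A.Bauto : WeakPA Sigma k).Leads w (c.1, (c.2.1).withRt Rt₂ hsupp, c.2.2) := by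
  intro c hc
  induction hc with
  | @final c h =>
    intro Rt₂ hsupp _
    refine Leads.final ?_
    intro j
    exact h j
  | @univ c hU _ _ =>
    exact absurd hU (Set.notMem_empty _)
  | @exist c c₂ hF hU hstep hl ih =>
    intro Rt₂ hsupp hag
    have hc : c = (c.1, c.2.1, c.2.2) := rfl
    rw [hc, step_iff] at hstep
    obtain ⟨h1, h2, K', actB, hδ, hpl, hc₂⟩ := hstep
    set i := c.1 with hi
    set K := c.2.1 with hK
    set θ := c.2.2 with hθ
    set K₂ := K.withRt Rt₂ hsupp with hK₂
    have hRetEq : A.RetK K₂ i = A.RetK K i :=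
      RetK_withRt A K Rt₂ hsupp i (hag i le_rfl)
    rcases hδ with ⟨hact, hrest⟩ | ⟨hact, hS0, hP0, hKt⟩ |
      ⟨hact, qc, hqP, R, hKt⟩ | ⟨hact, hS0, hN0, hP0, hKt⟩
    · -- processing step (physical stay)
      subst hact
      -- K' is some K.proc i Sn Nn Pn; handle the three shapes uniformly
      have key : ∀ Sn Nn Pn, K' = K.proc i Sn Nn Pn →
          (A.Bauto : WeakPA Sigma k).Leads w
            (i, K₂.proc i Sn Nn Pn, θ) := by
        intro Sn Nn Pn hKt
        have hih := ih Rt₂ hsupp ?_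
        · rw [hc₂, hKt] at hih
          simp only [mkSucc] at hih
          rw [BSt.withRt_proc K Rt₂ hsupp hsupp i Sn Nn Pn] at hih
          exact hih
        · intro j hj
          rw [hc₂, hKt] at *
          simp only [mkSucc, BSt.proc_Rt]
          exact hag j (by simpa [mkSucc] using hj)
      obtain ⟨q, hqS, hcase⟩ := hrest
      rcases hcase with ⟨hqF, hKt⟩ | ⟨hqU, hlift, hKt⟩ | ⟨hqF, hqU, q', act, hδa, hcase⟩
      · refine leads_of_step _ w rfl ?_ (key _ _ _ hKt)
        rw [step_iff]
        refine ⟨h1, h2, K₂.proc i (K.S i \ {q}) (K.N i) (K.P i), PAct.stay, ?_, by simp, rfl⟩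
        exact Or.inl ⟨rfl, q, hqS, Or.inl ⟨hqF, rfl⟩⟩
      · refine leads_of_step _ w rfl ?_ (key _ _ _ hKt)
        rw [step_iff]
        refine ⟨h1, h2, _, PAct.stay, ?_, by simp, rfl⟩
        refine Or.inl ⟨rfl, q, hqS, Or.inr (Or.inl ⟨hqU, ?_, rfl⟩)⟩
        rw [hRetEq]
        exact hlift
      · rcases hcase with ⟨hae, hKt⟩ | ⟨hae, hKt⟩ | ⟨hae, hret, hKt⟩ | ⟨hae, h2i, hKt⟩ <;>
          subst hae
        · refine leads_of_step _ w rfl ?_ (key _ _ _ hKt)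
          rw [step_iff]
          refine ⟨h1, h2, _, PAct.stay, ?_, by simp, rfl⟩
          exact Or.inl ⟨rfl, q, hqS, Or.inr (Or.inr
            ⟨hqF, hqU, q', PAct.stay, hδa, Or.inl ⟨rfl, rfl⟩⟩)⟩
        · refine leads_of_step _ w rfl ?_ (key _ _ _ hKt)
          rw [step_iff]
          refine ⟨h1, h2, _, PAct.stay, ?_, by simp, rfl⟩
          exact Or.inl ⟨rfl, q, hqS, Or.inr (Or.inr
            ⟨hqF, hqU, q', PAct.right, hδa, Or.inr (Or.inl ⟨rfl, rfl⟩)⟩)⟩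
        · refine leads_of_step _ w rfl ?_ (key _ _ _ hKt)
          rw [step_iff]
          refine ⟨h1, h2, _, PAct.stay, ?_, by simp, rfl⟩
          refine Or.inl ⟨rfl, q, hqS, Or.inr (Or.inr
            ⟨hqF, hqU, q', PAct.lift, hδa, Or.inr (Or.inr (Or.inl ⟨rfl, ?_, rfl⟩))⟩)⟩
          rw [hRetEq]
          exact hret
        · refine leads_of_step _ w rfl ?_ (key _ _ _ hKt)
          rw [step_iff]
          refine ⟨h1, h2, _, PAct.stay, ?_, by simp, rfl⟩
          exact Or.inl ⟨rfl, q, hqS, Or.inr (Or.inr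
            ⟨hqF, hqU, q', PAct.place, hδa, Or.inr (Or.inr (Or.inr ⟨rfl, h2i, rfl⟩))⟩)⟩
    · -- physical right
      subst hact
      have hagree : ∀ j, c₂.1 ≤ j → Rt₂ j = c₂.2.1.Rt j := by
        intro j hj
        rw [hc₂] at hj
        simp only [mkSucc] at hj
        rw [hc₂, hKt]
        simp only [mkSucc, BSt.proc_Rt]
        exact hag j hj
      have hih := ih Rt₂ hsupp hagree
      rw [hc₂, hKt] at hih
      simp only [mkSucc] at hih
      rw [BSt.withRt_proc K Rt₂ hsupp hsupp i (K.N i) ∅ (K.P i)] at hih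
      refine leads_of_step _ w rfl ?_ hih
      rw [step_iff]
      refine ⟨h1, h2, K₂.proc i (K.N i) ∅ (K.P i), PAct.right, ?_, by simp, rfl⟩
      exact Or.inr (Or.inl ⟨rfl, hS0, hP0, rfl⟩)
    · -- physical place (launch)
      subst hact
      have hsupp₃ : ∀ j, k < j →
          (fun j => if j = i - 1 ∧ i - 1 ≤ k then R else Rt₂ j) j = ∅ := by
        intro j hj
        dsimp only
        rw [if_neg (by rintro ⟨rfl, hle⟩; omega)]
        exact hsupp j hj
      have hagree : ∀ j, c₂.1 ≤ j →
          (fun j => if j = i - 1 ∧ i - 1 ≤ k then R else Rt₂ j) j = c₂.2.1.Rt j := by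
        intro j hj
        rw [hc₂] at hj
        simp only [mkSucc] at hj
        rw [hc₂, hKt]
        simp only [mkSucc]
        by_cases hji : j = i - 1 ∧ i - 1 ≤ k
        · rw [if_pos hji, hji.1, BSt.launch_Rt_child _ _ _ _ h2]
        · rw [if_neg hji, BSt.launch_Rt_ne]
          · refine hag j ?_
            rcases Nat.lt_or_ge j i with hlt | hge
            · exfalso
              exact hji ⟨by omega, by omega⟩
            · exact hge
          · intro hje
            exact hji ⟨hje, by omega⟩
      have hih := ih _ hsupp₃ hagree
      rw [hc₂, hKt] at hih
      simp only [mkSucc] at hih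
      have hKeq : ((K.launch i qc R).withRt
          (fun j => if j = i - 1 ∧ i - 1 ≤ k then R else Rt₂ j) hsupp₃)
            = K₂.launch i qc R := BSt.ext' rfl rfl rfl rfl
      rw [hKeq] at hih
      refine leads_of_step _ w rfl ?_ hih
      rw [step_iff]
      refine ⟨h1, h2, K₂.launch i qc R, PAct.place, ?_, fun _ => hpl rfl, rfl⟩
      exact Or.inr (Or.inr (Or.inl ⟨rfl, qc, hqP, R, rfl⟩))
    · -- physical lift
      subst hact
      subst hKt
      have hagree : ∀ j, c₂.1 ≤ j → Rt₂ j = c₂.2.1.Rt j := by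
        intro j hj
        rw [hc₂] at hj
        simp only [mkSucc] at hj
        rw [hc₂]
        simp only [mkSucc]
        refine hag j ?_
        omega
      have hih := ih Rt₂ hsupp hagree
      rw [hc₂] at hih
      simp only [mkSucc] at hih
      refine leads_of_step _ w rfl ?_ hih
      rw [step_iff]
      refine ⟨h1, h2, K₂, PAct.lift, ?_, by simp, rfl⟩
      exact Or.inr (Or.inr (Or.inr ⟨rfl, hS0, hN0, hP0, rfl⟩))

end WeakPA

namespace WeakPA

variable {Sigma D : Type} {k : ℕ} (A : WeakPA Sigma k) (w : List (Sigma × D))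

/-- Packaged child test. -/
def PackRel (R : Set A.Q) (i : ℕ) (q' : A.Q) (θ : ℕ → ℕ) : Prop :=
  ∃ R', Rel A w R' (i - 1, q', Function.update θ (i - 1) (θ i)) ∧
    ∀ r ∈ R', Rel A w R (i, r, θ)

theorem PackRel_agree {R : Set A.Q} {j : ℕ} {q : A.Q} {θ₁ θ₂ : ℕ → ℕ}
    (h : PackRel A w R j q θ₁) (hag : ∀ x, j ≤ x → θ₂ x = θ₁ x) :
    PackRel A w R j q θ₂ := by
  obtain ⟨R', hchild, hconts⟩ := h
  refine ⟨R', ?_, ?_⟩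
  · have := Rel_agree A w hchild (θ₂ := Function.update θ₂ (j - 1) (θ₂ j)) ?_
    · exact this
    · intro x hx
      simp only at hx ⊢
      by_cases hxj : x = j - 1
      · subst hxj; simp [hag j le_rfl]
      · rw [Function.update_of_ne hxj, Function.update_of_ne hxj]
        exact hag x (by omega)
  · intro r hr
    exact Rel_agree A w (hconts r hr) (fun x hx => hag x hx)

/-- The soundness invariant: every recorded obligation is honoured by `A`
relative to the promised return sets. -/
def Sem (i : ℕ) (K : BSt A.Q k) (θ : ℕ → ℕ) : Prop :=
  ∀ j, i ≤ j → j ≤ k →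
    (∀ q ∈ K.S j, Rel A w (A.RetK K j) (j, q, θ)) ∧
    (∀ q ∈ K.N j, Rel A w (A.RetK K j) (j, q, Function.update θ j (θ j + 1))) ∧
    (∀ q ∈ K.P j, 2 ≤ j ∧ PackRel A w (A.RetK K j) j q θ)

theorem Sem_back {i : ℕ} {K K' : BSt A.Q k} {θ : ℕ → ℕ}
    (ih : Sem A w i K' θ)
    (hfar : ∀ j, i < j → K'.S j = K.S j ∧ K'.N j = K.N j ∧ K'.P j = K.P j ∧
      A.RetK K' j = A.RetK K j)
    (hS : ∀ q'' ∈ K.S i, Rel A w (A.RetK K i) (i, q'', θ))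
    (hN : ∀ q'' ∈ K.N i, Rel A w (A.RetK K i) (i, q'', Function.update θ i (θ i + 1)))
    (hP : ∀ q'' ∈ K.P i, 2 ≤ i ∧ PackRel A w (A.RetK K i) i q'' θ) :
    Sem A w i K θ := by
  intro j hij hjk
  rcases eq_or_lt_of_le hij with rfl | hlt
  · exact ⟨hS, hN, hP⟩
  · obtain ⟨e1, e2, e3, e4⟩ := hfar j hlt
    obtain ⟨c1, c2, c3⟩ := ih j (by omega) hjk
    rw [e4] at c1 c2 c3
    rw [e1] at c1
    rw [e2] at c2
    rw [e3] at c3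
    exact ⟨c1, c2, c3⟩

theorem Bsound :
    ∀ c : (A.Bauto : WeakPA Sigma k).Config, (A.Bauto : WeakPA Sigma k).Leads w c →
      Sem A w c.1 c.2.1 c.2.2 := by
  intro c hc
  induction hc with
  | @final c h =>
    intro j hij hjk
    obtain ⟨e1, e2, e3⟩ := h j
    refine ⟨?_, ?_, ?_⟩
    · rw [e1]; rintro q ⟨⟩
    · rw [e2]; rintro q ⟨⟩
    · rw [e3]; rintro q ⟨⟩
  | @univ c hU _ _ =>
    exact absurd hU (Set.notMem_empty _)
  | @exist c c₂ hF hU hstep hl ih =>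
    have hcc : c = (c.1, c.2.1, c.2.2) := rfl
    rw [hcc, step_iff] at hstep
    obtain ⟨h1, h2, K', actB, hδ, hplB, hc₂⟩ := hstep
    set i := c.1 with hi
    set K := c.2.1 with hK
    set θ := c.2.2 with hθ
    show Sem A w i K θ
    rcases hδ with ⟨hact, q, hqS, hcase⟩ | ⟨hact, hS0, hP0, hKt⟩ |
      ⟨hact, qc, hqP, R, hKt⟩ | ⟨hact, hS0, hN0, hP0, hKt⟩
    · -- processing step (physical stay)
      subst hact
      rw [hc₂] at ih
      simp only [mkSucc] at ih
      have hfar : ∀ Sn Nn Pn, K' = K.proc i Sn Nn Pn → ∀ j, i < j →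
          K'.S j = K.S j ∧ K'.N j = K.N j ∧ K'.P j = K.P j ∧
          A.RetK K' j = A.RetK K j := by
        intro Sn Nn Pn hKt j hj
        rw [hKt]
        exact ⟨BSt.proc_S_ne _ _ _ _ _ (by omega), BSt.proc_N_ne _ _ _ _ _ (by omega),
          BSt.proc_P_ne _ _ _ _ _ (by omega), RetK_proc A K i j Sn Nn Pn⟩
      rcases hcase with ⟨hqF, hKt⟩ | ⟨hqU, hlift, hKt⟩ | ⟨hqF, hqU, q', act, hδa, hcase⟩
      · -- discharge a final obligation
        subst hKt
        have ihi := ih i le_rfl h2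
        rw [RetK_proc, BSt.proc_S_self _ _ _ _ _ h2, BSt.proc_N_self _ _ _ _ _ h2,
          BSt.proc_P_self _ _ _ _ _ h2] at ihi
        refine Sem_back A w ih (hfar _ _ _ rfl) ?_ ihi.2.1 ihi.2.2
        intro q'' hq''
        by_cases hqq : q'' = q
        · subst hqq; exact rel_final A w hqF
        · exact ihi.1 q'' ⟨hq'', hqq⟩
      · -- process a universal obligation
        subst hKt
        have ihi := ih i le_rfl h2
        rw [RetK_proc, BSt.proc_S_self _ _ _ _ _ h2, BSt.proc_N_self _ _ _ _ _ h2,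
          BSt.proc_P_self _ _ _ _ _ h2] at ihi
        refine Sem_back A w ih (hfar _ _ _ rfl) ?_
          (fun q'' hq'' => ihi.2.1 q'' (Or.inl hq''))
          (fun q'' hq'' => ihi.2.2 q'' (Or.inl hq''))
        intro q'' hq''
        by_cases hqq : q'' = q
        · subst hqq
          refine rel_univ A w hqU ?_
          intro q' act h1' h2' hδa hpl'
          cases act with
          | stay => exact ihi.1 q' (Or.inr hδa)
          | right => exact ihi.2.1 q' (Or.inr hδa)
          | lift => exact hlift q' hδa
          | place =>
            have h2i : 2 ≤ i := hpl' rfl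
            have := (ihi.2.2 q' (Or.inr ⟨hδa, h2i⟩)).2
            obtain ⟨R', hch, hco⟩ := this
            exact ⟨R', hch, hco⟩
        · exact ihi.1 q'' (Or.inl ⟨hq'', hqq⟩)
      · -- process an existential obligation
        have main : ∀ Sn Nn Pn, K' = K.proc i Sn Nn Pn →
            (A.RetK K i = A.RetK K i → Sn = Sn) →
            True → Sem A w i K θ → Sem A w i K θ := fun _ _ _ _ _ _ h => h
        clear main
        rcases hcase with ⟨hae, hKt⟩ | ⟨hae, hKt⟩ | ⟨hae, hret, hKt⟩ | ⟨hae, h2i, hKt⟩ <;>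
            subst hae <;> subst hKt <;>
          (have ihi := ih i le_rfl h2
           rw [RetK_proc, BSt.proc_S_self _ _ _ _ _ h2, BSt.proc_N_self _ _ _ _ _ h2,
             BSt.proc_P_self _ _ _ _ _ h2] at ihi)
        · -- simulated stay
          refine Sem_back A w ih (hfar _ _ _ rfl) ?_ ihi.2.1 ihi.2.2
          intro q'' hq''
          by_cases hqq : q'' = q
          · subst hqq
            refine rel_exist A w hqF hqU h1 h2 q' PAct.stay hδa (by simp) ?_
            exact ihi.1 q' (Or.inr rfl)
          · exact ihi.1 q'' (Or.inl ⟨hq'', hqq⟩)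
        · -- simulated right
          refine Sem_back A w ih (hfar _ _ _ rfl) ?_
            (fun q'' hq'' => ihi.2.1 q'' (Or.inl hq'')) ihi.2.2
          intro q'' hq''
          by_cases hqq : q'' = q
          · subst hqq
            refine rel_exist A w hqF hqU h1 h2 q' PAct.right hδa (by simp) ?_
            exact ihi.2.1 q' (Or.inr rfl)
          · exact ihi.1 q'' ⟨hq'', hqq⟩
        · -- simulated lift
          refine Sem_back A w ih (hfar _ _ _ rfl) ?_ ihi.2.1 ihi.2.2
          intro q'' hq''
          by_cases hqq : q'' = q
          · subst hqq
            exact rel_exist A w hqF hqU h1 h2 q' PAct.lift hδa (by simp) hret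
          · exact ihi.1 q'' ⟨hq'', hqq⟩
        · -- simulated place
          refine Sem_back A w ih (hfar _ _ _ rfl) ?_ ihi.2.1
            (fun q'' hq'' => ihi.2.2 q'' (Or.inl hq''))
          intro q'' hq''
          by_cases hqq : q'' = q
          · subst hqq
            refine rel_exist A w hqF hqU h1 h2 q' PAct.place hδa (fun _ => h2i) ?_
            obtain ⟨R', hch, hco⟩ := (ihi.2.2 q' (Or.inr rfl)).2
            exact ⟨R', hch, hco⟩
          · exact ihi.1 q'' ⟨hq'', hqq⟩
    · -- physical right
      subst hact
      subst hKt
      rw [hc₂] at ih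
      simp only [mkSucc] at ih
      have ihi := ih i le_rfl h2
      rw [RetK_proc, BSt.proc_S_self _ _ _ _ _ h2, BSt.proc_N_self _ _ _ _ _ h2,
        BSt.proc_P_self _ _ _ _ _ h2] at ihi
      intro j hij hjk
      rcases eq_or_lt_of_le hij with rfl | hlt
      · refine ⟨?_, ?_, ?_⟩
        · rw [hS0]; rintro q'' ⟨⟩
        · intro q'' hq''
          exact ihi.1 q'' hq''
        · rw [hP0]; rintro q'' ⟨⟩
      · obtain ⟨c1, c2, c3⟩ := ih j (by omega) hjk
        rw [RetK_proc] at c1 c2 c3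
        rw [BSt.proc_S_ne _ _ _ _ _ (show j ≠ i by omega)] at c1
        rw [BSt.proc_N_ne _ _ _ _ _ (show j ≠ i by omega)] at c2
        rw [BSt.proc_P_ne _ _ _ _ _ (show j ≠ i by omega)] at c3
        have hagj : ∀ x, j ≤ x → θ x = Function.update θ i (θ i + 1) x := by
          intro x hx
          rw [Function.update_of_ne (by omega)]
        refine ⟨?_, ?_, ?_⟩
        · intro q'' hq''
          exact Rel_agree A w (c1 q'' hq'') hagj
        · intro q'' hq''
          have := c2 q'' hq''
          refine Rel_agree A w this ?_
          intro x hx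
          simp only at hx ⊢
          by_cases hxj : x = j
          · subst hxj
            rw [Function.update_self, Function.update_self,
              Function.update_of_ne (by omega)]
          · rw [Function.update_of_ne hxj, Function.update_of_ne hxj,
              Function.update_of_ne (by omega)]
        · intro q'' hq''
          obtain ⟨hj2, hpk⟩ := c3 q'' hq''
          exact ⟨hj2, PackRel_agree A w hpk hagj⟩
    · -- physical place (launch)
      subst hact
      subst hKt
      have h2i : 2 ≤ i := hplB rfl
      rw [hc₂] at ih
      simp only [mkSucc] at ih
      intro j hij hjk
      have hji1 : j ≠ i - 1 := by omega
      have hRetj : A.RetK (K.launch i qc R) j = A.RetK K j := RetK_launch A K i j qc R hji1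
      have hagj : ∀ x, j ≤ x → θ x = Function.update θ (i - 1) (θ i) x := by
        intro x hx
        rw [Function.update_of_ne (by omega)]
      rcases eq_or_lt_of_le hij with rfl | hlt
      · -- level i
        obtain ⟨c1, c2, c3⟩ := ih i (by omega) h2
        rw [hRetj] at c1 c2 c3
        rw [BSt.launch_S_self _ _ _ _ h2] at c1
        rw [BSt.launch_N_self _ _ _ _ h2i] at c2
        rw [BSt.launch_P_self _ _ _ _ h2] at c3
        refine ⟨?_, ?_, ?_⟩
        · intro q'' hq''
          exact Rel_agree A w (c1 q'' (Or.inl hq'')) hagj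
        · intro q'' hq''
          refine Rel_agree A w (c2 q'' hq'') ?_
          intro x hx
          simp only at hx ⊢
          by_cases hxi : x = i
          · subst hxi
            rw [Function.update_self, Function.update_self,
              Function.update_of_ne (by omega)]
          · rw [Function.update_of_ne hxi, Function.update_of_ne hxi,
              Function.update_of_ne (by omega)]
        · intro q'' hq''
          by_cases hqq : q'' = qc
          · subst hqq
            refine ⟨h2i, ?_⟩
            obtain ⟨d1, d2, d3⟩ := ih (i - 1) le_rfl (by omega)
            refine ⟨R, ?_, ?_⟩
            · have hqmem : q'' ∈ (K.launch i q'' R).S (i - 1) := by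
                rw [BSt.launch_S_child _ _ _ _ h2i h2]
                rfl
              have := d1 q'' hqmem
              have hRetc : A.RetK (K.launch i q'' R) (i - 1) = R := by
                unfold RetK
                rw [if_neg (by omega), BSt.launch_Rt_child _ _ _ _ h2]
              rw [hRetc] at this
              exact this
            · intro r hr
              have hrmem : r ∈ (K.launch i q'' R).S i := by
                rw [BSt.launch_S_self _ _ _ _ h2]
                exact Or.inr hr
              have := c1 r (by rw [BSt.launch_S_self _ _ _ _ h2] at hrmem; exact hrmem)
              exact Rel_agree A w this hagj
          · have := c3 q'' ⟨hq'', hqq⟩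
            exact ⟨this.1, PackRel_agree A w this.2 hagj⟩
      · -- levels above i
        obtain ⟨c1, c2, c3⟩ := ih j (by omega) hjk
        rw [hRetj] at c1 c2 c3
        rw [BSt.launch_S_ne _ _ _ _ (show j ≠ i by omega) hji1] at c1
        rw [BSt.launch_N_ne _ _ _ _ hji1] at c2
        rw [BSt.launch_P_ne _ _ _ _ (show j ≠ i by omega) hji1] at c3
        refine ⟨?_, ?_, ?_⟩
        · intro q'' hq''
          exact Rel_agree A w (c1 q'' hq'') hagj
        · intro q'' hq''
          refine Rel_agree A w (c2 q'' hq'') ?_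
          intro x hx
          simp only at hx ⊢
          by_cases hxj : x = j
          · subst hxj
            rw [Function.update_self, Function.update_self,
              Function.update_of_ne (by omega)]
          · rw [Function.update_of_ne hxj, Function.update_of_ne hxj,
              Function.update_of_ne (by omega)]
        · intro q'' hq''
          obtain ⟨hj2, hpk⟩ := c3 q'' hq''
          exact ⟨hj2, PackRel_agree A w hpk hagj⟩
    · -- physical lift
      subst hact
      subst hKt
      rw [hc₂] at ih
      simp only [mkSucc] at ih
      intro j hij hjk
      rcases eq_or_lt_of_le hij with rfl | hlt
      · refine ⟨?_, ?_, ?_⟩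
        · rw [hS0]; rintro q'' ⟨⟩
        · rw [hN0]; rintro q'' ⟨⟩
        · rw [hP0]; rintro q'' ⟨⟩
      · exact ih j (by omega) hjk

end WeakPA

namespace WeakPA

namespace BSt

variable {k : ℕ} {Q : Type}

theorem ext_pt {K K' : BSt Q k}
    (h : ∀ j, K.S j = K'.S j ∧ K.N j = K'.N j ∧ K.P j = K'.P j ∧ K.Rt j = K'.Rt j) :
    K = K' :=
  ext' (funext fun j => (h j).1) (funext fun j => (h j).2.1)
    (funext fun j => (h j).2.2.1) (funext fun j => (h j).2.2.2)

theorem proc_S_eval (K : BSt Q k) (i : ℕ) (Sn Nn Pn : Set Q) (j : ℕ) :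
    (K.proc i Sn Nn Pn).S j = if j = i ∧ i ≤ k then Sn else K.S j := rfl
theorem proc_N_eval (K : BSt Q k) (i : ℕ) (Sn Nn Pn : Set Q) (j : ℕ) :
    (K.proc i Sn Nn Pn).N j = if j = i ∧ i ≤ k then Nn else K.N j := rfl
theorem proc_P_eval (K : BSt Q k) (i : ℕ) (Sn Nn Pn : Set Q) (j : ℕ) :
    (K.proc i Sn Nn Pn).P j = if j = i ∧ i ≤ k then Pn else K.P j := rfl
theorem proc_Rt_eval (K : BSt Q k) (i : ℕ) (Sn Nn Pn : Set Q) (j : ℕ) :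
    (K.proc i Sn Nn Pn).Rt j = K.Rt j := rfl

theorem launch_S_eval (K : BSt Q k) (i : ℕ) (qc : Q) (R : Set Q) (j : ℕ) :
    (K.launch i qc R).S j = if j = i ∧ i ≤ k then K.S i ∪ R
      else if j = i - 1 ∧ i - 1 ≤ k then {qc} else K.S j := rfl
theorem launch_N_eval (K : BSt Q k) (i : ℕ) (qc : Q) (R : Set Q) (j : ℕ) :
    (K.launch i qc R).N j = if j = i - 1 ∧ i - 1 ≤ k then ∅ else K.N j := rfl
theorem launch_P_eval (K : BSt Q k) (i : ℕ) (qc : Q) (R : Set Q) (j : ℕ) :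
    (K.launch i qc R).P j = if j = i ∧ i ≤ k then K.P i \ {qc}
      else if j = i - 1 ∧ i - 1 ≤ k then ∅ else K.P j := rfl
theorem launch_Rt_eval (K : BSt Q k) (i : ℕ) (qc : Q) (R : Set Q) (j : ℕ) :
    (K.launch i qc R).Rt j = if j = i - 1 ∧ i - 1 ≤ k then R else K.Rt j := rfl

theorem proc_proc (K : BSt Q k) (i : ℕ) (S1 N1 P1 S2 N2 P2 : Set Q) :
    (K.proc i S1 N1 P1).proc i S2 N2 P2 = K.proc i S2 N2 P2 := by
  refine ext_pt fun j => ⟨?_, ?_, ?_, ?_⟩ <;>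
    simp only [proc_S_eval, proc_N_eval, proc_P_eval, proc_Rt_eval] <;>
    split_ifs <;> rfl

theorem proc_eq_self (K : BSt Q k) (i : ℕ) : K.proc i (K.S i) (K.N i) (K.P i) = K := by
  refine ext_pt fun j => ⟨?_, ?_, ?_, ?_⟩ <;>
    simp only [proc_S_eval, proc_N_eval, proc_P_eval, proc_Rt_eval] <;>
    split_ifs with h <;> first | rfl | (obtain ⟨rfl, -⟩ := h; rfl)

end BSt

theorem union_diff_singleton {Q : Type} {S : Set Q} {q : Q} (hq : q ∉ S) :
    (S ∪ {q}) \ {q} = S := by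
  ext x
  simp only [Set.mem_diff, Set.mem_union, Set.mem_singleton_iff]
  constructor
  · rintro ⟨hx | rfl, hne⟩
    · exact hx
    · exact absurd rfl hne
  · intro hx
    exact ⟨Or.inl hx, fun he => hq (he ▸ hx)⟩

variable {Sigma D : Type} {k : ℕ} (A : WeakPA Sigma k) (w : List (Sigma × D))

theorem lowE_proc {i : ℕ} {K : BSt A.Q k} (h : A.lowE i K) (Sn Nn Pn : Set A.Q) :
    A.lowE i (K.proc i Sn Nn Pn) := by
  intro j hj
  rw [BSt.proc_S_ne _ _ _ _ _ (by omega), BSt.proc_N_ne _ _ _ _ _ (by omega),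
    BSt.proc_P_ne _ _ _ _ _ (by omega)]
  exact h j hj

theorem Bauto_not_F_of_S {i : ℕ} {K : BSt A.Q k} {q : A.Q} (hq : q ∈ K.S i) :
    K ∉ (A.Bauto : WeakPA Sigma k).F := by
  intro hF
  rw [(hF i).1] at hq
  exact hq

theorem Bauto_not_F_of_N {i : ℕ} {K : BSt A.Q k} {q : A.Q} (hq : q ∈ K.N i) :
    K ∉ (A.Bauto : WeakPA Sigma k).F := by
  intro hF
  rw [(hF i).2.1] at hq
  exact hq

theorem Bauto_not_F_of_P {i : ℕ} {K : BSt A.Q k} {q : A.Q} (hq : q ∈ K.P i) :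
    K ∉ (A.Bauto : WeakPA Sigma k).F := by
  intro hF
  rw [(hF i).2.2] at hq
  exact hq

end WeakPA

namespace WeakPA

variable {Sigma D : Type} {k : ℕ} (A : WeakPA Sigma k) (w : List (Sigma × D))

/-- Graded packaged child test. -/
def PackN (n : ℕ) (R : Set A.Q) (i : ℕ) (q : A.Q) (θ : ℕ → ℕ) : Prop :=
  ∃ R', RN A w n R' (i - 1, q, Function.update θ (i - 1) (θ i)) ∧
    ∀ r ∈ R', RN A w n R (i, r, θ)

/-- Adding an obligation with a depth-`n` certificate to `S i` preserves acceptance. -/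
def AddSStmt (n : ℕ) : Prop := ∀ (i : ℕ) (K : BSt A.Q k) (θ : ℕ → ℕ) (q : A.Q),
  1 ≤ i → i ≤ k → A.lowE i K → RN A w n (A.RetK K i) (i, q, θ) →
  (A.Bauto : WeakPA Sigma k).Leads w (i, K, θ) →
  (A.Bauto : WeakPA Sigma k).Leads w (i, K.proc i (K.S i ∪ {q}) (K.N i) (K.P i), θ)

/-- Adding an obligation to `N i` (a level at or above the current head). -/
def AddNStmt (n : ℕ) : Prop := ∀ (i : ℕ) (q' : A.Q), 1 ≤ i → i ≤ k →
  ∀ c : (A.Bauto : WeakPA Sigma k).Config, (A.Bauto : WeakPA Sigma k).Leads w c →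
    1 ≤ c.1 → c.1 ≤ i → A.lowE c.1 c.2.1 →
    RN A w n (A.RetK c.2.1 i) (i, q', Function.update c.2.2 i (c.2.2 i + 1)) →
    (A.Bauto : WeakPA Sigma k).Leads w
      (c.1, c.2.1.proc i (c.2.1.S i) (c.2.1.N i ∪ {q'}) (c.2.1.P i), c.2.2)

/-- Adding a pending child launch to `P i`. -/
def AddPStmt (n : ℕ) : Prop := ∀ (i : ℕ) (K : BSt A.Q k) (θ : ℕ → ℕ) (q : A.Q),
  2 ≤ i → i ≤ k → A.lowE i K → PackN A w n (A.RetK K i) i q θ →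
  (A.Bauto : WeakPA Sigma k).Leads w (i, K, θ) →
  (A.Bauto : WeakPA Sigma k).Leads w (i, K.proc i (K.S i) (K.N i) (K.P i ∪ {q}), θ)

theorem addS_set {n : ℕ} (hAdd : AddSStmt A w n) (i : ℕ) (K : BSt A.Q k) (θ : ℕ → ℕ)
    (X : Set A.Q) (h1 : 1 ≤ i) (h2 : i ≤ k) (hlow : A.lowE i K)
    (hX : ∀ q ∈ X, RN A w n (A.RetK K i) (i, q, θ))
    (hG : (A.Bauto : WeakPA Sigma k).Leads w (i, K, θ)) :
    (A.Bauto : WeakPA Sigma k).Leads w (i, K.proc i (K.S i ∪ X) (K.N i) (K.P i), θ) := by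
  classical
  haveI := A.finQ
  revert hX
  refine Set.Finite.induction_on
    (motive := fun X _ => (∀ q ∈ X, RN A w n (A.RetK K i) (i, q, θ)) →
      (A.Bauto : WeakPA Sigma k).Leads w (i, K.proc i (K.S i ∪ X) (K.N i) (K.P i), θ))
    X (Set.toFinite X) ?_ ?_
  · intro _
    rw [Set.union_empty, BSt.proc_eq_self]
    exact hG
  · intro a Y ha hYfin ihY hins
    have hGY := ihY fun q hq => hins q (Set.mem_insert_of_mem a hq)
    have hRa : RN A w n (A.RetK (K.proc i (K.S i ∪ Y) (K.N i) (K.P i)) i) (i, a, θ) := by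
      rw [RetK_proc]
      exact hins a (Set.mem_insert a Y)
    have key := hAdd i (K.proc i (K.S i ∪ Y) (K.N i) (K.P i)) θ a h1 h2
      (lowE_proc A hlow _ _ _) hRa hGY
    rw [BSt.proc_S_self _ _ _ _ _ h2, BSt.proc_N_self _ _ _ _ _ h2,
      BSt.proc_P_self _ _ _ _ _ h2, BSt.proc_proc] at key
    have hset : (K.S i ∪ Y) ∪ {a} = K.S i ∪ insert a Y := by
      ext x
      simp only [Set.mem_union, Set.mem_insert_iff, Set.mem_singleton_iff]
      tauto
    rw [hset] at key
    exact key

theorem addN_set {n : ℕ} (hAdd : AddNStmt A w n) (i : ℕ) (K : BSt A.Q k) (θ : ℕ → ℕ)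
    (X : Set A.Q) (h1 : 1 ≤ i) (h2 : i ≤ k) (hlow : A.lowE i K)
    (hX : ∀ q ∈ X, RN A w n (A.RetK K i) (i, q, Function.update θ i (θ i + 1)))
    (hG : (A.Bauto : WeakPA Sigma k).Leads w (i, K, θ)) :
    (A.Bauto : WeakPA Sigma k).Leads w (i, K.proc i (K.S i) (K.N i ∪ X) (K.P i), θ) := by
  classical
  haveI := A.finQ
  revert hX
  refine Set.Finite.induction_on
    (motive := fun X _ => (∀ q ∈ X, RN A w n (A.RetK K i) (i, q, Function.update θ i (θ i + 1))) →
      (A.Bauto : WeakPA Sigma k).Leads w (i, K.proc i (K.S i) (K.N i ∪ X) (K.P i), θ))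
    X (Set.toFinite X) ?_ ?_
  · intro _
    rw [Set.union_empty, BSt.proc_eq_self]
    exact hG
  · intro a Y ha hYfin ihY hins
    have hGY := ihY fun q hq => hins q (Set.mem_insert_of_mem a hq)
    have hRa : RN A w n (A.RetK (K.proc i (K.S i) (K.N i ∪ Y) (K.P i)) i)
        (i, a, Function.update θ i (θ i + 1)) := by
      rw [RetK_proc]
      exact hins a (Set.mem_insert a Y)
    have key := hAdd i a h1 h2 (i, K.proc i (K.S i) (K.N i ∪ Y) (K.P i), θ) hGY h1 le_rfl
      (lowE_proc A hlow _ _ _) hRa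
    simp only at key
    rw [BSt.proc_S_self _ _ _ _ _ h2, BSt.proc_N_self _ _ _ _ _ h2,
      BSt.proc_P_self _ _ _ _ _ h2, BSt.proc_proc] at key
    have hset : (K.N i ∪ Y) ∪ {a} = K.N i ∪ insert a Y := by
      ext x
      simp only [Set.mem_union, Set.mem_insert_iff, Set.mem_singleton_iff]
      tauto
    rw [hset] at key
    exact key

theorem addP_set {n : ℕ} (hAdd : AddPStmt A w n) (i : ℕ) (K : BSt A.Q k) (θ : ℕ → ℕ)
    (X : Set A.Q) (h2i : 2 ≤ i) (h2 : i ≤ k) (hlow : A.lowE i K)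
    (hX : ∀ q ∈ X, PackN A w n (A.RetK K i) i q θ)
    (hG : (A.Bauto : WeakPA Sigma k).Leads w (i, K, θ)) :
    (A.Bauto : WeakPA Sigma k).Leads w (i, K.proc i (K.S i) (K.N i) (K.P i ∪ X), θ) := by
  classical
  haveI := A.finQ
  revert hX
  refine Set.Finite.induction_on
    (motive := fun X _ => (∀ q ∈ X, PackN A w n (A.RetK K i) i q θ) →
      (A.Bauto : WeakPA Sigma k).Leads w (i, K.proc i (K.S i) (K.N i) (K.P i ∪ X), θ))
    X (Set.toFinite X) ?_ ?_
  · intro _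
    rw [Set.union_empty, BSt.proc_eq_self]
    exact hG
  · intro a Y ha hYfin ihY hins
    have hGY := ihY fun q hq => hins q (Set.mem_insert_of_mem a hq)
    have hRa : PackN A w n (A.RetK (K.proc i (K.S i) (K.N i) (K.P i ∪ Y)) i) i a θ := by
      rw [RetK_proc]
      exact hins a (Set.mem_insert a Y)
    have key := hAdd i (K.proc i (K.S i) (K.N i) (K.P i ∪ Y)) θ a h2i h2
      (lowE_proc A hlow _ _ _) hRa hGY
    rw [BSt.proc_S_self _ _ _ _ _ h2, BSt.proc_N_self _ _ _ _ _ h2,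
      BSt.proc_P_self _ _ _ _ _ h2, BSt.proc_proc] at key
    have hset : (K.P i ∪ Y) ∪ {a} = K.P i ∪ insert a Y := by
      ext x
      simp only [Set.mem_union, Set.mem_insert_iff, Set.mem_singleton_iff]
      tauto
    rw [hset] at key
    exact key

end WeakPA

namespace WeakPA

variable {Sigma D : Type} {k : ℕ} (A : WeakPA Sigma k) (w : List (Sigma × D))

theorem Bstep_mk (i : ℕ) (K K' : BSt A.Q k) (θ : ℕ → ℕ) (actB : PAct)
    (h1 : 1 ≤ i) (h2 : i ≤ k)
    (hδ : A.Bdelta i (labelAt w (θ i)) (eqSet w k i θ) K K' actB)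
    (hpl : actB = PAct.place → 2 ≤ i) :
    (A.Bauto : WeakPA Sigma k).step w (i, K, θ) (mkSucc i θ K' actB) := by
  rw [step_iff]
  exact ⟨h1, h2, K', actB, hδ, hpl, rfl⟩

theorem AddP_from_S (n : ℕ) (hS : AddSStmt A w n) : AddPStmt A w n := by
  intro i K θ q h2i hik hlow hpack hG
  have h1 : 1 ≤ i := by omega
  by_cases hqP : q ∈ K.P i
  · have habs : K.P i ∪ {q} = K.P i := by
      ext x
      simp only [Set.mem_union, Set.mem_singleton_iff, or_iff_left_iff_imp]
      rintro rfl
      exact hqP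
    rw [habs, BSt.proc_eq_self]
    exact hG
  · obtain ⟨R', hchild, hconts⟩ := hpack
    have G1 := addS_set A w hS i K θ R' h1 hik hlow (fun r hr => hconts r hr) hG
    set KA := K.proc i (K.S i ∪ R') (K.N i) (K.P i) with hKA
    have hsupp : ∀ j, k < j → (fun j => if j = i - 1 ∧ i - 1 ≤ k then R' else K.Rt j) j = ∅ := by
      intro j hj
      dsimp only
      rw [if_neg (by rintro ⟨rfl, h⟩; omega)]
      exact K.hRt j hj
    have hagree : ∀ j, ((i, KA, θ) : (A.Bauto : WeakPA Sigma k).Config).1 ≤ j →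
        (fun j => if j = i - 1 ∧ i - 1 ≤ k then R' else K.Rt j) j
          = ((i, KA, θ) : (A.Bauto : WeakPA Sigma k).Config).2.1.Rt j := by
      intro j hj
      simp only at hj ⊢
      rw [if_neg (by rintro ⟨rfl, h⟩; omega)]
      rw [hKA, BSt.proc_Rt]
    have G2 := BLeads_Rt_agree A w (i, KA, θ) G1 _ hsupp hagree
    simp only at G2
    set KB := KA.withRt (fun j => if j = i - 1 ∧ i - 1 ≤ k then R' else K.Rt j) hsupp
      with hKB
    set θ' := Function.update θ (i - 1) (θ i) with hθ'
    have hagθ : ∀ x, ((i, KB, θ) : (A.Bauto : WeakPA Sigma k).Config).1 ≤ x →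
        θ' x = ((i, KB, θ) : (A.Bauto : WeakPA Sigma k).Config).2.2 x := by
      intro x hx
      simp only at hx ⊢
      rw [hθ', Function.update_of_ne (by omega)]
    have G3 := leads_agree (A.Bauto : WeakPA Sigma k) w (i, KB, θ) G2 θ' hagθ
    simp only at G3
    -- facts about KB below level i
    have hKBS : ∀ j, j < i → KB.S j = ∅ := by
      intro j hj
      rw [hKB, BSt.withRt_S, hKA, BSt.proc_S_ne _ _ _ _ _ (by omega)]
      exact (hlow j hj).1
    have hKBN : ∀ j, j < i → KB.N j = ∅ := by
      intro j hj
      rw [hKB, BSt.withRt_N, hKA, BSt.proc_N_ne _ _ _ _ _ (by omega)]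
      exact (hlow j hj).2.1
    have hKBP : ∀ j, j < i → KB.P j = ∅ := by
      intro j hj
      rw [hKB, BSt.withRt_P, hKA, BSt.proc_P_ne _ _ _ _ _ (by omega)]
      exact (hlow j hj).2.2
    have hii : i - 1 + 1 = i := by omega
    have G4 : (A.Bauto : WeakPA Sigma k).Leads w (i - 1, KB, θ') := by
      refine leads_of_step _ w rfl
        (Bstep_mk A w (i - 1) KB KB θ' PAct.lift (by omega) (by omega) ?_ (by simp)) ?_
      · exact Or.inr (Or.inr (Or.inr ⟨rfl, hKBS _ (by omega), hKBN _ (by omega),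
          hKBP _ (by omega), rfl⟩))
      · simp only [mkSucc]
        rw [hii]
        exact G3
    have hRetKB : A.RetK KB (i - 1) = R' := by
      unfold RetK
      rw [if_neg (by omega)]
      rw [hKB, BSt.withRt_Rt]
      exact if_pos ⟨rfl, by omega⟩
    have hlowKB : A.lowE (i - 1) KB := by
      intro j hj
      exact ⟨hKBS j (by omega), hKBN j (by omega), hKBP j (by omega)⟩
    have hRN : RN A w n (A.RetK KB (i - 1)) (i - 1, q, θ') := by
      rw [hRetKB]
      exact hchild
    have G5 := hS (i - 1) KB θ' q (by omega) (by omega) hlowKB hRN G4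
    -- final launch step
    have hne1 : (i : ℕ) ≠ i - 1 := by omega
    have hne2 : (i - 1 : ℕ) ≠ i := by omega
    have hik1 : i - 1 ≤ k := by omega
    have hlow1 := hlow (i - 1) (by omega)
    have hKeq : (K.proc i (K.S i) (K.N i) (K.P i ∪ {q})).launch i q R'
        = KB.proc (i - 1) (KB.S (i - 1) ∪ {q}) (KB.N (i - 1)) (KB.P (i - 1)) := by
      rw [hKB, hKA]
      refine BSt.ext_pt fun j' => ⟨?_, ?_, ?_, ?_⟩
      · by_cases hji : j' = i
        · rw [hji, BSt.launch_S_self _ _ _ _ hik, BSt.proc_S_self _ _ _ _ _ hik,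
            BSt.proc_S_ne _ _ _ _ _ hne1, BSt.withRt_S, BSt.proc_S_self _ _ _ _ _ hik]
        · by_cases hji1 : j' = i - 1
          · rw [hji1, BSt.launch_S_child _ _ _ _ h2i hik,
              BSt.proc_S_self _ _ _ _ _ hik1, BSt.withRt_S,
              BSt.proc_S_ne _ _ _ _ _ hne2, hlow1.1, Set.empty_union]
          · rw [BSt.launch_S_ne _ _ _ _ hji hji1, BSt.proc_S_ne _ _ _ _ _ hji,
              BSt.proc_S_ne _ _ _ _ _ hji1, BSt.withRt_S, BSt.proc_S_ne _ _ _ _ _ hji]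
      · by_cases hji1 : j' = i - 1
        · rw [hji1, BSt.launch_N_child _ _ _ _ hik, BSt.proc_N_self _ _ _ _ _ hik1,
            BSt.withRt_N, BSt.proc_N_ne _ _ _ _ _ hne2, hlow1.2.1]
        · by_cases hji : j' = i
          · rw [hji, BSt.launch_N_self _ _ _ _ h2i, BSt.proc_N_self _ _ _ _ _ hik,
              BSt.proc_N_ne _ _ _ _ _ hne1, BSt.withRt_N, BSt.proc_N_self _ _ _ _ _ hik]
          · rw [BSt.launch_N_ne _ _ _ _ hji1, BSt.proc_N_ne _ _ _ _ _ hji,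
              BSt.proc_N_ne _ _ _ _ _ hji1, BSt.withRt_N, BSt.proc_N_ne _ _ _ _ _ hji]
      · by_cases hji : j' = i
        · rw [hji, BSt.launch_P_self _ _ _ _ hik, BSt.proc_P_self _ _ _ _ _ hik,
            union_diff_singleton hqP, BSt.proc_P_ne _ _ _ _ _ hne1, BSt.withRt_P,
            BSt.proc_P_self _ _ _ _ _ hik]
        · by_cases hji1 : j' = i - 1
          · rw [hji1, BSt.launch_P_child _ _ _ _ h2i hik, BSt.proc_P_self _ _ _ _ _ hik1,
              BSt.withRt_P, BSt.proc_P_ne _ _ _ _ _ hne2, hlow1.2.2]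
          · rw [BSt.launch_P_ne _ _ _ _ hji hji1, BSt.proc_P_ne _ _ _ _ _ hji,
              BSt.proc_P_ne _ _ _ _ _ hji1, BSt.withRt_P, BSt.proc_P_ne _ _ _ _ _ hji]
      · rw [BSt.proc_Rt, BSt.withRt_Rt]
        by_cases hji1 : j' = i - 1
        · rw [hji1, BSt.launch_Rt_child _ _ _ _ hik, if_pos ⟨rfl, hik1⟩]
        · rw [BSt.launch_Rt_ne _ _ _ _ hji1, if_neg (by rintro ⟨h, _⟩; exact hji1 h),
            BSt.proc_Rt]
    refine leads_of_step _ w rfl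
      (Bstep_mk A w i (K.proc i (K.S i) (K.N i) (K.P i ∪ {q}))
        ((K.proc i (K.S i) (K.N i) (K.P i ∪ {q})).launch i q R') θ PAct.place h1 hik ?_
        (fun _ => h2i)) ?_
    · refine Or.inr (Or.inr (Or.inl ⟨rfl, q, ?_, R', rfl⟩))
      rw [BSt.proc_P_self _ _ _ _ _ hik]
      exact Or.inr rfl
    · simp only [mkSucc]
      rw [hKeq]
      exact G5

end WeakPA

namespace WeakPA

variable {Sigma D : Type} {k : ℕ} (A : WeakPA Sigma k) (w : List (Sigma × D))

theorem AddS_step (n : ℕ) (ihS : AddSStmt A w n) (ihN : AddNStmt A w n)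
    (ihP : AddPStmt A w n) : AddSStmt A w (n + 1) := by
  intro i K θ q h1 hik hlow hRN hG
  by_cases hqS : q ∈ K.S i
  · have habs : K.S i ∪ {q} = K.S i := by
      ext x
      simp only [Set.mem_union, Set.mem_singleton_iff, or_iff_left_iff_imp]
      rintro rfl
      exact hqS
    rw [habs, BSt.proc_eq_self]
    exact hG
  · rw [RN_succ_iff] at hRN
    rcases hRN with hF | ⟨hU, hcl⟩ | ⟨hF, hU, -, -, q', act, hδa, hpl, hs⟩
    · -- the obligation is final: discharge it
      have hKeq : (K.proc i (K.S i ∪ {q}) (K.N i) (K.P i)).proc i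
          ((K.proc i (K.S i ∪ {q}) (K.N i) (K.P i)).S i \ {q})
          ((K.proc i (K.S i ∪ {q}) (K.N i) (K.P i)).N i)
          ((K.proc i (K.S i ∪ {q}) (K.N i) (K.P i)).P i) = K := by
        rw [BSt.proc_S_self _ _ _ _ _ hik, BSt.proc_N_self _ _ _ _ _ hik,
          BSt.proc_P_self _ _ _ _ _ hik, BSt.proc_proc, union_diff_singleton hqS,
          BSt.proc_eq_self]
      have Gfin := hG
      rw [← hKeq] at Gfin
      refine leads_of_step _ w rfl
        (Bstep_mk A w i _ _ θ PAct.stay h1 hik ?_ (by simp)) Gfin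
      refine Or.inl ⟨rfl, q, ?_, Or.inl ⟨hF, rfl⟩⟩
      rw [BSt.proc_S_self _ _ _ _ _ hik]
      exact Or.inr rfl
    · -- the obligation is universal: spawn all successor obligations
      have hstays : ∀ q'' ∈ {q'' | A.δ i (labelAt w (θ i)) (eqSet w k i θ) q q'' PAct.stay},
          RN A w n (A.RetK K i) (i, q'', θ) := by
        intro q'' hd
        exact hcl q'' PAct.stay h1 hik hd (by simp)
      have hrights : ∀ q'' ∈ {q'' | A.δ i (labelAt w (θ i)) (eqSet w k i θ) q q'' PAct.right},
          RN A w n (A.RetK K i) (i, q'', Function.update θ i (θ i + 1)) := by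
        intro q'' hd
        exact hcl q'' PAct.right h1 hik hd (by simp)
      have hlifts : ∀ q'', A.δ i (labelAt w (θ i)) (eqSet w k i θ) q q'' PAct.lift →
          q'' ∈ A.RetK K i := by
        intro q'' hd
        exact hcl q'' PAct.lift h1 hik hd (by simp)
      have hplaces : ∀ q'' ∈ {q'' | A.δ i (labelAt w (θ i)) (eqSet w k i θ) q q'' PAct.place
          ∧ 2 ≤ i}, PackN A w n (A.RetK K i) i q'' θ := by
        rintro q'' ⟨hd, h2i⟩
        exact hcl q'' PAct.place h1 hik hd (fun _ => h2i)
      have G1 := addS_set A w ihS i K θ _ h1 hik hlow hstays hG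
      have hlowA := lowE_proc A hlow
        (K.S i ∪ {q'' | A.δ i (labelAt w (θ i)) (eqSet w k i θ) q q'' PAct.stay})
        (K.N i) (K.P i)
      have G2 := addN_set A w ihN i _ θ
        {q'' | A.δ i (labelAt w (θ i)) (eqSet w k i θ) q q'' PAct.right} h1 hik hlowA
        (by
          intro q'' hq''
          rw [RetK_proc]
          exact hrights q'' hq'') G1
      rw [BSt.proc_S_self _ _ _ _ _ hik, BSt.proc_N_self _ _ _ _ _ hik,
        BSt.proc_P_self _ _ _ _ _ hik, BSt.proc_proc] at G2
      have G3 : (A.Bauto : WeakPA Sigma k).Leads w (i, K.proc i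
          (K.S i ∪ {q'' | A.δ i (labelAt w (θ i)) (eqSet w k i θ) q q'' PAct.stay})
          (K.N i ∪ {q'' | A.δ i (labelAt w (θ i)) (eqSet w k i θ) q q'' PAct.right})
          (K.P i ∪ {q'' | A.δ i (labelAt w (θ i)) (eqSet w k i θ) q q'' PAct.place ∧ 2 ≤ i}),
          θ) := by
        by_cases h2i : 2 ≤ i
        · have hlowB := lowE_proc A hlow
            (K.S i ∪ {q'' | A.δ i (labelAt w (θ i)) (eqSet w k i θ) q q'' PAct.stay})
            (K.N i ∪ {q'' | A.δ i (labelAt w (θ i)) (eqSet w k i θ) q q'' PAct.right})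
            (K.P i)
          have G3' := addP_set A w ihP i _ θ
            {q'' | A.δ i (labelAt w (θ i)) (eqSet w k i θ) q q'' PAct.place ∧ 2 ≤ i}
            h2i hik hlowB
            (by
              intro q'' hq''
              rw [RetK_proc]
              exact hplaces q'' hq'') G2
          rw [BSt.proc_S_self _ _ _ _ _ hik, BSt.proc_N_self _ _ _ _ _ hik,
            BSt.proc_P_self _ _ _ _ _ hik, BSt.proc_proc] at G3'
          exact G3'
        · have hempty : {q'' | A.δ i (labelAt w (θ i)) (eqSet w k i θ) q q'' PAct.place
              ∧ 2 ≤ i} = (∅ : Set A.Q) := by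
            ext x
            simp only [Set.mem_setOf_eq, Set.mem_empty_iff_false, iff_false, not_and]
            intro _
            exact h2i
          rw [hempty, Set.union_empty]
          exact G2
      have hKeq : (K.proc i (K.S i ∪ {q}) (K.N i) (K.P i)).proc i
          (((K.proc i (K.S i ∪ {q}) (K.N i) (K.P i)).S i \ {q})
            ∪ {q'' | A.δ i (labelAt w (θ i)) (eqSet w k i θ) q q'' PAct.stay})
          ((K.proc i (K.S i ∪ {q}) (K.N i) (K.P i)).N i
            ∪ {q'' | A.δ i (labelAt w (θ i)) (eqSet w k i θ) q q'' PAct.right})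
          ((K.proc i (K.S i ∪ {q}) (K.N i) (K.P i)).P i
            ∪ {q'' | A.δ i (labelAt w (θ i)) (eqSet w k i θ) q q'' PAct.place ∧ 2 ≤ i})
          = K.proc i
          (K.S i ∪ {q'' | A.δ i (labelAt w (θ i)) (eqSet w k i θ) q q'' PAct.stay})
          (K.N i ∪ {q'' | A.δ i (labelAt w (θ i)) (eqSet w k i θ) q q'' PAct.right})
          (K.P i ∪ {q'' | A.δ i (labelAt w (θ i)) (eqSet w k i θ) q q'' PAct.place ∧ 2 ≤ i}) := by
        rw [BSt.proc_S_self _ _ _ _ _ hik, BSt.proc_N_self _ _ _ _ _ hik,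
          BSt.proc_P_self _ _ _ _ _ hik, BSt.proc_proc, union_diff_singleton hqS]
      have Gfin := G3
      rw [← hKeq] at Gfin
      refine leads_of_step _ w rfl
        (Bstep_mk A w i _ _ θ PAct.stay h1 hik ?_ (by simp)) Gfin
      refine Or.inl ⟨rfl, q, ?_, Or.inr (Or.inl ⟨hU, ?_, rfl⟩)⟩
      · rw [BSt.proc_S_self _ _ _ _ _ hik]
        exact Or.inr rfl
      · intro q'' hd
        rw [RetK_proc]
        exact hlifts q'' hd
    · -- the obligation is existential
      cases act with
      | stay =>
        have G1 := ihS i K θ q' h1 hik hlow hs hG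
        have hKeq : (K.proc i (K.S i ∪ {q}) (K.N i) (K.P i)).proc i
            (((K.proc i (K.S i ∪ {q}) (K.N i) (K.P i)).S i \ {q}) ∪ {q'})
            ((K.proc i (K.S i ∪ {q}) (K.N i) (K.P i)).N i)
            ((K.proc i (K.S i ∪ {q}) (K.N i) (K.P i)).P i)
            = K.proc i (K.S i ∪ {q'}) (K.N i) (K.P i) := by
          rw [BSt.proc_S_self _ _ _ _ _ hik, BSt.proc_N_self _ _ _ _ _ hik,
            BSt.proc_P_self _ _ _ _ _ hik, BSt.proc_proc, union_diff_singleton hqS]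
        rw [← hKeq] at G1
        refine leads_of_step _ w rfl
          (Bstep_mk A w i _ _ θ PAct.stay h1 hik ?_ (by simp)) G1
        refine Or.inl ⟨rfl, q, ?_, Or.inr (Or.inr ⟨hF, hU, q', PAct.stay, hδa,
          Or.inl ⟨rfl, rfl⟩⟩)⟩
        rw [BSt.proc_S_self _ _ _ _ _ hik]
        exact Or.inr rfl
      | right =>
        have G1 := ihN i q' h1 hik (i, K, θ) hG h1 le_rfl hlow hs
        simp only at G1
        have hKeq : (K.proc i (K.S i ∪ {q}) (K.N i) (K.P i)).proc i
            ((K.proc i (K.S i ∪ {q}) (K.N i) (K.P i)).S i \ {q})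
            ((K.proc i (K.S i ∪ {q}) (K.N i) (K.P i)).N i ∪ {q'})
            ((K.proc i (K.S i ∪ {q}) (K.N i) (K.P i)).P i)
            = K.proc i (K.S i) (K.N i ∪ {q'}) (K.P i) := by
          rw [BSt.proc_S_self _ _ _ _ _ hik, BSt.proc_N_self _ _ _ _ _ hik,
            BSt.proc_P_self _ _ _ _ _ hik, BSt.proc_proc, union_diff_singleton hqS]
        rw [← hKeq] at G1
        refine leads_of_step _ w rfl
          (Bstep_mk A w i _ _ θ PAct.stay h1 hik ?_ (by simp)) G1
        refine Or.inl ⟨rfl, q, ?_, Or.inr (Or.inr ⟨hF, hU, q', PAct.right, hδa,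
          Or.inr (Or.inl ⟨rfl, rfl⟩)⟩)⟩
        rw [BSt.proc_S_self _ _ _ _ _ hik]
        exact Or.inr rfl
      | lift =>
        have hKeq : (K.proc i (K.S i ∪ {q}) (K.N i) (K.P i)).proc i
            ((K.proc i (K.S i ∪ {q}) (K.N i) (K.P i)).S i \ {q})
            ((K.proc i (K.S i ∪ {q}) (K.N i) (K.P i)).N i)
            ((K.proc i (K.S i ∪ {q}) (K.N i) (K.P i)).P i) = K := by
          rw [BSt.proc_S_self _ _ _ _ _ hik, BSt.proc_N_self _ _ _ _ _ hik,
            BSt.proc_P_self _ _ _ _ _ hik, BSt.proc_proc, union_diff_singleton hqS,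
            BSt.proc_eq_self]
        have Gfin := hG
        rw [← hKeq] at Gfin
        refine leads_of_step _ w rfl
          (Bstep_mk A w i _ _ θ PAct.stay h1 hik ?_ (by simp)) Gfin
        refine Or.inl ⟨rfl, q, ?_, Or.inr (Or.inr ⟨hF, hU, q', PAct.lift, hδa,
          Or.inr (Or.inr (Or.inl ⟨rfl, ?_, rfl⟩))⟩)⟩
        · rw [BSt.proc_S_self _ _ _ _ _ hik]
          exact Or.inr rfl
        · rw [RetK_proc]
          exact hs
      | place =>
        have h2i : 2 ≤ i := hpl rfl
        have G1 := ihP i K θ q' h2i hik hlow hs hG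
        have hKeq : (K.proc i (K.S i ∪ {q}) (K.N i) (K.P i)).proc i
            ((K.proc i (K.S i ∪ {q}) (K.N i) (K.P i)).S i \ {q})
            ((K.proc i (K.S i ∪ {q}) (K.N i) (K.P i)).N i)
            ((K.proc i (K.S i ∪ {q}) (K.N i) (K.P i)).P i ∪ {q'})
            = K.proc i (K.S i) (K.N i) (K.P i ∪ {q'}) := by
          rw [BSt.proc_S_self _ _ _ _ _ hik, BSt.proc_N_self _ _ _ _ _ hik,
            BSt.proc_P_self _ _ _ _ _ hik, BSt.proc_proc, union_diff_singleton hqS]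
        rw [← hKeq] at G1
        refine leads_of_step _ w rfl
          (Bstep_mk A w i _ _ θ PAct.stay h1 hik ?_ (by simp)) G1
        refine Or.inl ⟨rfl, q, ?_, Or.inr (Or.inr ⟨hF, hU, q', PAct.place, hδa,
          Or.inr (Or.inr (Or.inr ⟨rfl, h2i, rfl⟩))⟩)⟩
        rw [BSt.proc_S_self _ _ _ _ _ hik]
        exact Or.inr rfl

end WeakPA

namespace WeakPA

theorem BSt.proc_comm_ne {Q : Type} {k : ℕ} (K : BSt Q k) {i j : ℕ} (hij : j ≠ i)
    (S1 N1 P1 S2 N2 P2 : Set Q) :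
    (K.proc i S1 N1 P1).proc j S2 N2 P2 = (K.proc j S2 N2 P2).proc i S1 N1 P1 := by
  refine BSt.ext_pt fun x => ⟨?_, ?_, ?_, ?_⟩ <;>
    simp only [BSt.proc_S_eval, BSt.proc_N_eval, BSt.proc_P_eval, BSt.proc_Rt_eval] <;>
    split_ifs <;> first | rfl | (exfalso; omega)

variable {Sigma D : Type} {k : ℕ} (A : WeakPA Sigma k) (w : List (Sigma × D))

theorem AddN_from_S (n : ℕ) (hS : AddSStmt A w n) : AddNStmt A w n := by
  intro i q' h1i hik c hc
  induction hc with
  | @univ c hU _ _ =>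
    exact absurd hU (Set.notMem_empty _)
  | @final c hcF =>
    intro hc1 hci hlow hRN
    set K := c.2.1 with hK
    set θ := c.2.2 with hθ
    -- at level i : do the postponed right move, then install the obligation
    have hGtop : (A.Bauto : WeakPA Sigma k).Leads w
        (i, K.proc i (K.S i) (K.N i ∪ {q'}) (K.P i), θ) := by
      have hlowK : A.lowE i K := fun j _ =>
        ⟨(hcF j).1, (hcF j).2.1, (hcF j).2.2⟩
      have GS := hS i K (Function.update θ i (θ i + 1)) q' h1i hik hlowK hRN
        (Leads.final hcF)
      have hKeq : (K.proc i (K.S i) (K.N i ∪ {q'}) (K.P i)).proc i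
          ((K.proc i (K.S i) (K.N i ∪ {q'}) (K.P i)).N i) ∅
          ((K.proc i (K.S i) (K.N i ∪ {q'}) (K.P i)).P i)
          = K.proc i (K.S i ∪ {q'}) (K.N i) (K.P i) := by
        rw [BSt.proc_N_self _ _ _ _ _ hik, BSt.proc_P_self _ _ _ _ _ hik, BSt.proc_proc,
          (hcF i).1, (hcF i).2.1, Set.empty_union]
      rw [← hKeq] at GS
      refine leads_of_step _ w rfl
        (Bstep_mk A w i _ _ θ PAct.right h1i hik ?_ (by simp)) GS
      refine Or.inr (Or.inl ⟨rfl, ?_, ?_, rfl⟩)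
      · rw [BSt.proc_S_self _ _ _ _ _ hik]
        exact (hcF i).1
      · rw [BSt.proc_P_self _ _ _ _ _ hik]
        exact (hcF i).2.2
    -- climb from the current head up to level i
    have climb : ∀ d j₀, 1 ≤ j₀ → j₀ + d = i → (A.Bauto : WeakPA Sigma k).Leads w
        (j₀, K.proc i (K.S i) (K.N i ∪ {q'}) (K.P i), θ) := by
      intro d
      induction d with
      | zero =>
        intro j₀ h1j hj
        obtain rfl : j₀ = i := by omega
        exact hGtop
      | succ d ihd =>
        intro j₀ h1j hj
        have hji : j₀ < i := by omega
        refine leads_of_step _ w rfl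
          (Bstep_mk A w j₀ _ (K.proc i (K.S i) (K.N i ∪ {q'}) (K.P i)) θ PAct.lift h1j
            (by omega) ?_ (by simp)) ?_
        · refine Or.inr (Or.inr (Or.inr ⟨rfl, ?_, ?_, ?_, rfl⟩))
          · rw [BSt.proc_S_ne _ _ _ _ _ (by omega)]
            exact (hcF j₀).1
          · rw [BSt.proc_N_ne _ _ _ _ _ (by omega)]
            exact (hcF j₀).2.1
          · rw [BSt.proc_P_ne _ _ _ _ _ (by omega)]
            exact (hcF j₀).2.2
        · simp only [mkSucc]
          exact ihd (j₀ + 1) (by omega) (by omega)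
    exact climb (i - c.1) c.1 hc1 (by omega)
  | @exist c c₂ hF hU hstep hl ih =>
    intro hc1 hci hlow hRN
    obtain ⟨j, K, θ⟩ := c
    simp only at hc1 hci hlow hRN hF hU
    rw [step_iff] at hstep
    obtain ⟨h1, h2, K', actB, hδ, hplB, hc₂⟩ := hstep
    -- pointwise evaluation of the modified state
    have hMS : ∀ x, (K.proc i (K.S i) (K.N i ∪ {q'}) (K.P i)).S x = K.S x := by
      intro x
      by_cases hxi : x = i
      · rw [hxi, BSt.proc_S_self _ _ _ _ _ hik]
      · rw [BSt.proc_S_ne _ _ _ _ _ hxi]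
    have hMP : ∀ x, (K.proc i (K.S i) (K.N i ∪ {q'}) (K.P i)).P x = K.P x := by
      intro x
      by_cases hxi : x = i
      · rw [hxi, BSt.proc_P_self _ _ _ _ _ hik]
      · rw [BSt.proc_P_ne _ _ _ _ _ hxi]
    have hMN : ∀ x, x ≠ i → (K.proc i (K.S i) (K.N i ∪ {q'}) (K.P i)).N x = K.N x := by
      intro x hxi
      rw [BSt.proc_N_ne _ _ _ _ _ hxi]
    have hMNi : (K.proc i (K.S i) (K.N i ∪ {q'}) (K.P i)).N i = K.N i ∪ {q'} :=
      BSt.proc_N_self _ _ _ _ _ hik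
    have hMcomm : ∀ Sn Nn Pn : Set A.Q,
        (K.proc i (K.S i) (K.N i ∪ {q'}) (K.P i)).proc j Sn
          (if j = i then Nn ∪ {q'} else Nn) Pn
        = (K.proc j Sn Nn Pn).proc i ((K.proc j Sn Nn Pn).S i)
          ((K.proc j Sn Nn Pn).N i ∪ {q'}) ((K.proc j Sn Nn Pn).P i) := by
      intro Sn Nn Pn
      by_cases hji : j = i
      · subst hji
        rw [if_pos rfl, BSt.proc_proc, BSt.proc_S_self _ _ _ _ _ h2,
          BSt.proc_N_self _ _ _ _ _ h2, BSt.proc_P_self _ _ _ _ _ h2, BSt.proc_proc]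
      · rw [if_neg hji, BSt.proc_S_ne _ _ _ _ _ (fun h => hji h.symm),
          BSt.proc_N_ne _ _ _ _ _ (fun h => hji h.symm),
          BSt.proc_P_ne _ _ _ _ _ (fun h => hji h.symm),
          BSt.proc_comm_ne K hji]
    have hMNj' : ∀ X : Set A.Q, (K.proc i (K.S i) (K.N i ∪ {q'}) (K.P i)).N j ∪ X
        = if j = i then (K.N j ∪ X) ∪ {q'} else K.N j ∪ X := by
      intro X
      by_cases hji : j = i
      · subst hji
        rw [if_pos rfl, hMNi, Set.union_right_comm]
      · rw [if_neg hji, hMN j hji]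
    have hMNj0 : (K.proc i (K.S i) (K.N i ∪ {q'}) (K.P i)).N j
        = if j = i then K.N j ∪ {q'} else K.N j := by
      by_cases hji : j = i
      · subst hji
        rw [if_pos rfl, hMNi]
      · rw [if_neg hji, hMN j hji]
    rcases hδ with ⟨hact, q, hqS, hcase⟩ | ⟨hact, hS0, hP0, hKt⟩ |
      ⟨hact, qc, hqP, R, hKt⟩ | ⟨hact, hS0, hN0, hP0, hKt⟩
    · -- processing step (physical stay)
      subst hact
      rw [hc₂] at ih
      simp only [mkSucc] at ih
      have key : ∀ Sn Nn Pn : Set A.Q, K' = K.proc j Sn Nn Pn →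
          (A.Bauto : WeakPA Sigma k).Leads w (j, (K.proc j Sn Nn Pn).proc i
            ((K.proc j Sn Nn Pn).S i) ((K.proc j Sn Nn Pn).N i ∪ {q'})
            ((K.proc j Sn Nn Pn).P i), θ) := by
        intro Sn Nn Pn hKt
        subst hKt
        refine ih h1 hci (lowE_proc A hlow _ _ _) ?_
        rw [RetK_proc]
        exact hRN
      rcases hcase with ⟨hqF, hKt⟩ | ⟨hqU, hliftK, hKt⟩ | ⟨hqF2, hqU2, q2, act2, hδa, hcase2⟩
      · -- discharge final obligation
        have G := key _ _ _ hKt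
        have heq : (K.proc i (K.S i) (K.N i ∪ {q'}) (K.P i)).proc j
            ((K.proc i (K.S i) (K.N i ∪ {q'}) (K.P i)).S j \ {q})
            ((K.proc i (K.S i) (K.N i ∪ {q'}) (K.P i)).N j)
            ((K.proc i (K.S i) (K.N i ∪ {q'}) (K.P i)).P j)
            = (K.proc j (K.S j \ {q}) (K.N j) (K.P j)).proc i
              ((K.proc j (K.S j \ {q}) (K.N j) (K.P j)).S i)
              ((K.proc j (K.S j \ {q}) (K.N j) (K.P j)).N i ∪ {q'})
              ((K.proc j (K.S j \ {q}) (K.N j) (K.P j)).P i) := by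
          rw [hMS j, hMP j, hMNj0]
          exact hMcomm (K.S j \ {q}) (K.N j) (K.P j)
        rw [← heq] at G
        refine leads_of_step _ w rfl
          (Bstep_mk A w j _ _ θ PAct.stay h1 h2 ?_ (by simp)) G
        refine Or.inl ⟨rfl, q, ?_, Or.inl ⟨hqF, rfl⟩⟩
        rw [hMS j]
        exact hqS
      · -- universal obligation
        have G := key _ _ _ hKt
        have heq : (K.proc i (K.S i) (K.N i ∪ {q'}) (K.P i)).proc j
            (((K.proc i (K.S i) (K.N i ∪ {q'}) (K.P i)).S j \ {q})
              ∪ {q'' | A.δ j (labelAt w (θ j)) (eqSet w k j θ) q q'' PAct.stay})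
            ((K.proc i (K.S i) (K.N i ∪ {q'}) (K.P i)).N j
              ∪ {q'' | A.δ j (labelAt w (θ j)) (eqSet w k j θ) q q'' PAct.right})
            ((K.proc i (K.S i) (K.N i ∪ {q'}) (K.P i)).P j
              ∪ {q'' | A.δ j (labelAt w (θ j)) (eqSet w k j θ) q q'' PAct.place ∧ 2 ≤ j})
            = (K.proc j ((K.S j \ {q})
                ∪ {q'' | A.δ j (labelAt w (θ j)) (eqSet w k j θ) q q'' PAct.stay})
              (K.N j ∪ {q'' | A.δ j (labelAt w (θ j)) (eqSet w k j θ) q q'' PAct.right})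
              (K.P j ∪ {q'' | A.δ j (labelAt w (θ j)) (eqSet w k j θ) q q'' PAct.place
                ∧ 2 ≤ j})).proc i
              ((K.proc j ((K.S j \ {q})
                ∪ {q'' | A.δ j (labelAt w (θ j)) (eqSet w k j θ) q q'' PAct.stay})
              (K.N j ∪ {q'' | A.δ j (labelAt w (θ j)) (eqSet w k j θ) q q'' PAct.right})
              (K.P j ∪ {q'' | A.δ j (labelAt w (θ j)) (eqSet w k j θ) q q'' PAct.place
                ∧ 2 ≤ j})).S i)
              ((K.proc j ((K.S j \ {q})
                ∪ {q'' | A.δ j (labelAt w (θ j)) (eqSet w k j θ) q q'' PAct.stay})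
              (K.N j ∪ {q'' | A.δ j (labelAt w (θ j)) (eqSet w k j θ) q q'' PAct.right})
              (K.P j ∪ {q'' | A.δ j (labelAt w (θ j)) (eqSet w k j θ) q q'' PAct.place
                ∧ 2 ≤ j})).N i ∪ {q'})
              ((K.proc j ((K.S j \ {q})
                ∪ {q'' | A.δ j (labelAt w (θ j)) (eqSet w k j θ) q q'' PAct.stay})
              (K.N j ∪ {q'' | A.δ j (labelAt w (θ j)) (eqSet w k j θ) q q'' PAct.right})
              (K.P j ∪ {q'' | A.δ j (labelAt w (θ j)) (eqSet w k j θ) q q'' PAct.place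
                ∧ 2 ≤ j})).P i) := by
          rw [hMS j, hMP j, hMNj']
          exact hMcomm _ _ _
        rw [← heq] at G
        refine leads_of_step _ w rfl
          (Bstep_mk A w j _ _ θ PAct.stay h1 h2 ?_ (by simp)) G
        refine Or.inl ⟨rfl, q, ?_, Or.inr (Or.inl ⟨hqU, ?_, rfl⟩)⟩
        · rw [hMS j]
          exact hqS
        · intro q'' hd
          rw [RetK_proc]
          exact hliftK q'' hd
      · -- existential obligation
        rcases hcase2 with ⟨hae, hKt⟩ | ⟨hae, hKt⟩ | ⟨hae, hret, hKt⟩ | ⟨hae, h2j, hKt⟩ <;>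
          subst hae
        · have G := key _ _ _ hKt
          have heq : (K.proc i (K.S i) (K.N i ∪ {q'}) (K.P i)).proc j
              (((K.proc i (K.S i) (K.N i ∪ {q'}) (K.P i)).S j \ {q}) ∪ {q2})
              ((K.proc i (K.S i) (K.N i ∪ {q'}) (K.P i)).N j)
              ((K.proc i (K.S i) (K.N i ∪ {q'}) (K.P i)).P j)
              = (K.proc j ((K.S j \ {q}) ∪ {q2}) (K.N j) (K.P j)).proc i
                ((K.proc j ((K.S j \ {q}) ∪ {q2}) (K.N j) (K.P j)).S i)
                ((K.proc j ((K.S j \ {q}) ∪ {q2}) (K.N j) (K.P j)).N i ∪ {q'})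
                ((K.proc j ((K.S j \ {q}) ∪ {q2}) (K.N j) (K.P j)).P i) := by
            rw [hMS j, hMP j, hMNj0]
            exact hMcomm _ _ _
          rw [← heq] at G
          refine leads_of_step _ w rfl
            (Bstep_mk A w j _ _ θ PAct.stay h1 h2 ?_ (by simp)) G
          refine Or.inl ⟨rfl, q, ?_, Or.inr (Or.inr ⟨hqF2, hqU2, q2, PAct.stay, hδa,
            Or.inl ⟨rfl, rfl⟩⟩)⟩
          rw [hMS j]
          exact hqS
        · have G := key _ _ _ hKt
          have heq : (K.proc i (K.S i) (K.N i ∪ {q'}) (K.P i)).proc j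
              ((K.proc i (K.S i) (K.N i ∪ {q'}) (K.P i)).S j \ {q})
              ((K.proc i (K.S i) (K.N i ∪ {q'}) (K.P i)).N j ∪ {q2})
              ((K.proc i (K.S i) (K.N i ∪ {q'}) (K.P i)).P j)
              = (K.proc j (K.S j \ {q}) (K.N j ∪ {q2}) (K.P j)).proc i
                ((K.proc j (K.S j \ {q}) (K.N j ∪ {q2}) (K.P j)).S i)
                ((K.proc j (K.S j \ {q}) (K.N j ∪ {q2}) (K.P j)).N i ∪ {q'})
                ((K.proc j (K.S j \ {q}) (K.N j ∪ {q2}) (K.P j)).P i) := by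
            rw [hMS j, hMP j, hMNj']
            exact hMcomm _ _ _
          rw [← heq] at G
          refine leads_of_step _ w rfl
            (Bstep_mk A w j _ _ θ PAct.stay h1 h2 ?_ (by simp)) G
          refine Or.inl ⟨rfl, q, ?_, Or.inr (Or.inr ⟨hqF2, hqU2, q2, PAct.right, hδa,
            Or.inr (Or.inl ⟨rfl, rfl⟩)⟩)⟩
          rw [hMS j]
          exact hqS
        · have G := key _ _ _ hKt
          have heq : (K.proc i (K.S i) (K.N i ∪ {q'}) (K.P i)).proc j
              ((K.proc i (K.S i) (K.N i ∪ {q'}) (K.P i)).S j \ {q})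
              ((K.proc i (K.S i) (K.N i ∪ {q'}) (K.P i)).N j)
              ((K.proc i (K.S i) (K.N i ∪ {q'}) (K.P i)).P j)
              = (K.proc j (K.S j \ {q}) (K.N j) (K.P j)).proc i
                ((K.proc j (K.S j \ {q}) (K.N j) (K.P j)).S i)
                ((K.proc j (K.S j \ {q}) (K.N j) (K.P j)).N i ∪ {q'})
                ((K.proc j (K.S j \ {q}) (K.N j) (K.P j)).P i) := by
            rw [hMS j, hMP j, hMNj0]
            exact hMcomm _ _ _
          rw [← heq] at G
          refine leads_of_step _ w rfl
            (Bstep_mk A w j _ _ θ PAct.stay h1 h2 ?_ (by simp)) G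
          refine Or.inl ⟨rfl, q, ?_, Or.inr (Or.inr ⟨hqF2, hqU2, q2, PAct.lift, hδa,
            Or.inr (Or.inr (Or.inl ⟨rfl, ?_, rfl⟩))⟩)⟩
          · rw [hMS j]
            exact hqS
          · rw [RetK_proc]
            exact hret
        · have G := key _ _ _ hKt
          have heq : (K.proc i (K.S i) (K.N i ∪ {q'}) (K.P i)).proc j
              ((K.proc i (K.S i) (K.N i ∪ {q'}) (K.P i)).S j \ {q})
              ((K.proc i (K.S i) (K.N i ∪ {q'}) (K.P i)).N j)
              ((K.proc i (K.S i) (K.N i ∪ {q'}) (K.P i)).P j ∪ {q2})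
              = (K.proc j (K.S j \ {q}) (K.N j) (K.P j ∪ {q2})).proc i
                ((K.proc j (K.S j \ {q}) (K.N j) (K.P j ∪ {q2})).S i)
                ((K.proc j (K.S j \ {q}) (K.N j) (K.P j ∪ {q2})).N i ∪ {q'})
                ((K.proc j (K.S j \ {q}) (K.N j) (K.P j ∪ {q2})).P i) := by
            rw [hMS j, hMP j, hMNj0]
            exact hMcomm _ _ _
          rw [← heq] at G
          refine leads_of_step _ w rfl
            (Bstep_mk A w j _ _ θ PAct.stay h1 h2 ?_ (by simp)) G
          refine Or.inl ⟨rfl, q, ?_, Or.inr (Or.inr ⟨hqF2, hqU2, q2, PAct.place, hδa,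
            Or.inr (Or.inr (Or.inr ⟨rfl, h2j, rfl⟩))⟩)⟩
          rw [hMS j]
          exact hqS
    · -- physical right
      subst hact
      subst hKt
      rw [hc₂] at ih hl
      simp only [mkSucc] at ih hl
      by_cases hji : j = i
      · -- flush splice
        subst hji
        have GS := hS j (K.proc j (K.N j) ∅ (K.P j)) (Function.update θ j (θ j + 1)) q'
          h1i hik (lowE_proc A hlow _ _ _) (by rw [RetK_proc]; exact hRN) hl
        have heq : (K.proc j (K.S j) (K.N j ∪ {q'}) (K.P j)).proc j
            ((K.proc j (K.S j) (K.N j ∪ {q'}) (K.P j)).N j) ∅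
            ((K.proc j (K.S j) (K.N j ∪ {q'}) (K.P j)).P j)
            = (K.proc j (K.N j) ∅ (K.P j)).proc j
              ((K.proc j (K.N j) ∅ (K.P j)).S j ∪ {q'})
              ((K.proc j (K.N j) ∅ (K.P j)).N j)
              ((K.proc j (K.N j) ∅ (K.P j)).P j) := by
          rw [hMNi, hMP j, BSt.proc_proc, BSt.proc_S_self _ _ _ _ _ hik,
            BSt.proc_N_self _ _ _ _ _ hik, BSt.proc_P_self _ _ _ _ _ hik, BSt.proc_proc]
        rw [← heq] at GS
        refine leads_of_step _ w rfl
          (Bstep_mk A w j _ _ θ PAct.right h1 h2 ?_ (by simp)) GS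
        refine Or.inr (Or.inl ⟨rfl, ?_, ?_, rfl⟩)
        · rw [hMS j]
          exact hS0
        · rw [hMP j]
          exact hP0
      · -- commute below level i
        have hRN' : RN A w n
            (A.RetK (K.proc j (K.N j) ∅ (K.P j)) i)
            (i, q', Function.update (Function.update θ j (θ j + 1)) i
              (Function.update θ j (θ j + 1) i + 1)) := by
          rw [RetK_proc]
          refine RN_agree A w n _ (i, q', Function.update θ i (θ i + 1)) _ hRN ?_
          intro x hx
          simp only
          by_cases hxi : x = i
          · subst hxi
            rw [Function.update_self, Function.update_self,
              Function.update_of_ne (fun h => hji h.symm)]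
          · rw [Function.update_of_ne hxi, Function.update_of_ne hxi,
              Function.update_of_ne (by omega)]
        have G := ih h1 (by omega) (lowE_proc A hlow _ _ _) hRN'
        have heq : (K.proc i (K.S i) (K.N i ∪ {q'}) (K.P i)).proc j
            ((K.proc i (K.S i) (K.N i ∪ {q'}) (K.P i)).N j) ∅
            ((K.proc i (K.S i) (K.N i ∪ {q'}) (K.P i)).P j)
            = (K.proc j (K.N j) ∅ (K.P j)).proc i
              ((K.proc j (K.N j) ∅ (K.P j)).S i)
              ((K.proc j (K.N j) ∅ (K.P j)).N i ∪ {q'})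
              ((K.proc j (K.N j) ∅ (K.P j)).P i) := by
          rw [hMN j hji, hMP j]
          have h := hMcomm (K.N j) ∅ (K.P j)
          rw [if_neg hji] at h
          exact h
        rw [← heq] at G
        refine leads_of_step _ w rfl
          (Bstep_mk A w j _ _ θ PAct.right h1 h2 ?_ (by simp)) G
        refine Or.inr (Or.inl ⟨rfl, ?_, ?_, rfl⟩)
        · rw [hMS j]
          exact hS0
        · rw [hMP j]
          exact hP0
    · -- physical place (launch)
      subst hact
      subst hKt
      have h2j : 2 ≤ j := hplB rfl
      have hij1 : i ≠ j - 1 := by omega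
      rw [hc₂] at ih hl
      simp only [mkSucc] at ih hl
      have hlowL : A.lowE (j - 1) (K.launch j qc R) := by
        intro l hl'
        rw [BSt.launch_S_ne _ _ _ _ (by omega) (by omega),
          BSt.launch_N_ne _ _ _ _ (by omega), BSt.launch_P_ne _ _ _ _ (by omega) (by omega)]
        exact hlow l (by omega)
      have hRN' : RN A w n (A.RetK (K.launch j qc R) i)
          (i, q', Function.update (Function.update θ (j - 1) (θ j)) i
            (Function.update θ (j - 1) (θ j) i + 1)) := by
        rw [RetK_launch A K j i qc R hij1]
        refine RN_agree A w n _ (i, q', Function.update θ i (θ i + 1)) _ hRN ?_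
        intro x hx
        simp only
        by_cases hxi : x = i
        · subst hxi
          rw [Function.update_self, Function.update_self,
            Function.update_of_ne hij1]
        · rw [Function.update_of_ne hxi, Function.update_of_ne hxi,
            Function.update_of_ne (by omega)]
      have G := ih (by omega) (by omega) hlowL hRN'
      have heq : (K.proc i (K.S i) (K.N i ∪ {q'}) (K.P i)).launch j qc R
          = (K.launch j qc R).proc i ((K.launch j qc R).S i)
            ((K.launch j qc R).N i ∪ {q'}) ((K.launch j qc R).P i) := by
        refine BSt.ext_pt fun x => ⟨?_, ?_, ?_, ?_⟩ <;>
          simp only [BSt.proc_S_eval, BSt.proc_N_eval, BSt.proc_P_eval, BSt.proc_Rt_eval,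
            BSt.launch_S_eval, BSt.launch_N_eval, BSt.launch_P_eval, BSt.launch_Rt_eval] <;>
          split_ifs <;>
            first
              | rfl
              | (exfalso; omega)
              | (simp only [show i = j from by omega])
      rw [← heq] at G
      refine leads_of_step _ w rfl
        (Bstep_mk A w j _ _ θ PAct.place h1 h2 ?_ (fun _ => h2j)) G
      refine Or.inr (Or.inr (Or.inl ⟨rfl, qc, ?_, R, rfl⟩))
      rw [hMP j]
      exact hqP
    · -- physical lift
      subst hact
      rw [hKt] at hc₂
      rw [hc₂] at ih hl
      simp only [mkSucc] at ih hl
      by_cases hji : j = i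
      · -- lift splice
        subst hji
        have L1 := leads_agree (A.Bauto : WeakPA Sigma k) w (j + 1, K, θ) hl
          (Function.update θ j (θ j + 1))
          (by
            intro x hx
            simp only at hx ⊢
            rw [Function.update_of_ne (by omega)])
        simp only at L1
        have L2 : (A.Bauto : WeakPA Sigma k).Leads w
            (j, K, Function.update θ j (θ j + 1)) := by
          refine leads_of_step _ w rfl
            (Bstep_mk A w j K K (Function.update θ j (θ j + 1)) PAct.lift h1 h2 ?_
              (by simp)) L1
          exact Or.inr (Or.inr (Or.inr ⟨rfl, hS0, hN0, hP0, rfl⟩))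
        have L3 := hS j K (Function.update θ j (θ j + 1)) q' h1i hik hlow hRN L2
        have heq : (K.proc j (K.S j) (K.N j ∪ {q'}) (K.P j)).proc j
            ((K.proc j (K.S j) (K.N j ∪ {q'}) (K.P j)).N j) ∅
            ((K.proc j (K.S j) (K.N j ∪ {q'}) (K.P j)).P j)
            = K.proc j (K.S j ∪ {q'}) (K.N j) (K.P j) := by
          rw [hMNi, hMP j, BSt.proc_proc, hS0, hN0]
        rw [← heq] at L3
        refine leads_of_step _ w rfl
          (Bstep_mk A w j _ _ θ PAct.right h1 h2 ?_ (by simp)) L3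
        refine Or.inr (Or.inl ⟨rfl, ?_, ?_, rfl⟩)
        · rw [hMS j]
          exact hS0
        · rw [hMP j]
          exact hP0
      · -- commute below level i
        have hlow' : A.lowE (j + 1) K := by
          intro l hl'
          by_cases hlj : l = j
          · subst hlj
            exact ⟨hS0, hN0, hP0⟩
          · exact hlow l (by omega)
        have G := ih (by omega) (by omega) hlow' hRN
        refine leads_of_step _ w rfl
          (Bstep_mk A w j _ (K.proc i (K.S i) (K.N i ∪ {q'}) (K.P i)) θ PAct.lift h1 h2
            ?_ (by simp)) G
        refine Or.inr (Or.inr (Or.inr ⟨rfl, ?_, ?_, ?_, rfl⟩))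
        · rw [hMS j]
          exact hS0
        · rw [hMN j hji]
          exact hN0
        · rw [hMP j]
          exact hP0

end WeakPA

namespace WeakPA

variable {Sigma D : Type} {k : ℕ} (A : WeakPA Sigma k) (w : List (Sigma × D))

theorem addAll : ∀ n, AddSStmt A w n ∧ AddNStmt A w n ∧ AddPStmt A w n := by
  intro n
  induction n with
  | zero =>
    refine ⟨?_, ?_, ?_⟩
    · intro i K θ q _ _ _ hRN _
      exact absurd hRN id
    · intro i q' _ _ c _ _ _ _ hRN
      exact absurd hRN id
    · intro i K θ q _ _ _ hpack _
      obtain ⟨R', hch, -⟩ := hpack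
      exact absurd hch id
  | succ n ihn =>
    obtain ⟨hSn, -, -⟩ := ihn
    have hN := AddN_from_S A w n hSn
    have hP := AddP_from_S A w n hSn
    have hSn1 := AddS_step A w n hSn hN hP
    exact ⟨hSn1, AddN_from_S A w (n + 1) hSn1, AddP_from_S A w (n + 1) hSn1⟩

theorem Bauto_lang (hk : 1 ≤ k) :
    (A.Bauto : WeakPA Sigma k).Lang D = A.Lang D := by
  ext w
  simp only [Lang, Set.mem_setOf_eq, Accepts, initConfig]
  constructor
  · intro hB
    have hSem := Bsound A w _ hB
    have hmem : A.q0 ∈ ((A.Bauto : WeakPA Sigma k).q0).S k := by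
      show A.q0 ∈ ((BSt.empty A.Q k).proc k {A.q0} ∅ ∅).S k
      rw [BSt.proc_S_self _ _ _ _ _ le_rfl]
      rfl
    have hrel := (hSem k le_rfl le_rfl).1 A.q0 hmem
    have hretk : A.RetK ((A.Bauto : WeakPA Sigma k).q0) k = A.F ∪ A.U := if_pos rfl
    rw [hretk] at hrel
    obtain ⟨n, hn⟩ := hrel
    refine leads_of_RN A w n _ _ hn ?_
    intro r hr
    exact (leads_dead A w (k + 1) r _ (by omega)).2 hr
  · intro hA
    obtain ⟨n, hLN⟩ := LN_of_leads A w _ hA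
    have hRN : RN A w n (A.F ∪ A.U) (k, A.q0, fun _ => 0) := by
      refine RN_of_LN A w n _ _ hLN ?_
      intro r m hm hLm
      have := leads_of_LN A w m _ hLm
      exact (leads_dead A w (k + 1) r _ (by omega)).1 this
    have hSstmt := (addAll A w n).1
    have hG0 : (A.Bauto : WeakPA Sigma k).Leads w (k, BSt.empty A.Q k, fun _ => 0) :=
      Leads.final (by intro j; exact ⟨rfl, rfl, rfl⟩)
    have hlow0 : A.lowE k (BSt.empty A.Q k) := fun j _ => ⟨rfl, rfl, rfl⟩
    have hRN' : RN A w n (A.RetK (BSt.empty A.Q k) k) (k, A.q0, fun _ => 0) := by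
      rw [show A.RetK (BSt.empty A.Q k) k = A.F ∪ A.U from if_pos rfl]
      exact hRN
    have hfin := hSstmt k (BSt.empty A.Q k) (fun _ => 0) A.q0 hk le_rfl hlow0 hRN' hG0
    have heq : (BSt.empty A.Q k).proc k ((BSt.empty A.Q k).S k ∪ {A.q0})
        ((BSt.empty A.Q k).N k) ((BSt.empty A.Q k).P k)
        = (BSt.empty A.Q k).proc k {A.q0} ∅ ∅ := by
      show (BSt.empty A.Q k).proc k (∅ ∪ {A.q0}) ∅ ∅ = _
      rw [Set.empty_union]
    rw [heq] at hfin
    exact hfin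

/-- Main construction: every weak `k`-PA has a nondeterministic equivalent. -/
theorem exists_nondet (A : WeakPA Sigma k) :
    ∃ B : WeakPA Sigma k, B.Nondeterministic ∧ B.Lang D = A.Lang D := by
  classical
  by_cases hk : 1 ≤ k
  · exact ⟨A.Bauto, rfl, Bauto_lang A hk⟩
  · have hk0 : k = 0 := by omega
    refine ⟨{ Q := PUnit
              finQ := inferInstance
              q0 := PUnit.unit
              F := if A.q0 ∈ A.F ∪ A.U then Set.univ else ∅
              U := ∅
              δ := fun _ _ _ _ _ _ => False }, rfl, ?_⟩
    ext w
    simp only [Lang, Set.mem_setOf_eq, Accepts, initConfig]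
    have hdead : ¬ (1 ≤ k ∧ k ≤ k) := fun h => hk h.1
    rw [leads_dead _ w k _ _ hdead, leads_dead _ w k _ _ hdead]
    by_cases hq : A.q0 ∈ A.F ∪ A.U
    · simp [hq]
    · simp [hq]

end WeakPA

/-- For every (alternating) weak `k`-pebble automaton there exists a
nondeterministic weak `k`-pebble automaton accepting the same data language; hence
alternating and nondeterministic weak `k`-PA recognize the same class of data languages. -/
theorem alternating_weakPA_eq_nondeterministic_weakPA
    (Sigma D : Type) (k : ℕ) (A : WeakPA Sigma k) (hA : A.WellFormed) :
    (∃ B : WeakPA Sigma k, B.Nondeterministic ∧ B.Lang D = A.Lang D) ∧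
    {L : Set (List (Sigma × D)) | ∃ A' : WeakPA Sigma k, A'.WellFormed ∧ A'.Lang D = L} =
      {L : Set (List (Sigma × D)) | ∃ B : WeakPA Sigma k, B.Nondeterministic ∧ B.Lang D = L} := by
  constructor
  · exact WeakPA.exists_nondet A
  · ext L
    simp only [Set.mem_setOf_eq]
    constructor
    · rintro ⟨A', hA', rfl⟩
      obtain ⟨B, hB1, hB2⟩ := WeakPA.exists_nondet (D := D) A'
      exact ⟨B, hB1, hB2⟩
    · rintro ⟨B, hB1, rfl⟩
      refine ⟨B, ?_, rfl⟩
      intro q hq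
      rw [hB1] at hq
      exact absurd hq (Set.notMem_empty _)
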